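/- arXiv:1308.5993 — 9 statements merged into one kernel-verified Lean document; each statement's English description precedes it below -/
import Mathlib

section
/- Let m ≥ 2, s ≥ 1 be integers, let d = mq + r with 0 ≤ r ≤ m−1, and suppose x_1, …, x_m are nonnegative integers with Σ x_k = d. Then d(ms − d) − m·Σ_{k=1}^m x_k(s − x_k) ≥ r(m − r). -/
open Finset

/-- The key inequality of the standard construction: for `d = mq + r` with `0 ≤ r ≤ m-1` and
nonnegative integers `x_1, …, x_m` with `Σ x_k = d`, one has
`d(ms - d) - m Σ x_k (s - x_k) ≥ r (m - r)`. -/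
theorem flow_ge_remainder_product (m s q r d : ℕ) (hm : 2 ≤ m) (hs : 1 ≤ s)
    (hr : r ≤ m - 1) (hd : d = m * q + r)
    (x : Fin m → ℕ) (hsum : ∑ k, x k = d) :
    (d : ℤ) * ((m : ℤ) * (s : ℤ) - (d : ℤ)) -
        (m : ℤ) * ∑ k, (x k : ℤ) * ((s : ℤ) - (x k : ℤ)) ≥
      (r : ℤ) * ((m : ℤ) - (r : ℤ)) := by
  have hsum' : (∑ k, (x k : ℤ)) = (d : ℤ) := by exact_mod_cast hsum
  have hd' : (d : ℤ) = (m : ℤ) * q + r := by exact_mod_cast hd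
  have hterm : ∀ k : Fin m, 0 ≤ ((x k : ℤ) - q) * ((x k : ℤ) - q - 1) := by
    intro k
    rcases le_or_gt ((x k : ℤ)) q with h | h
    · nlinarith
    · exact mul_nonneg (by omega) (by omega)
  have hpos : 0 ≤ ∑ k, ((x k : ℤ) - q) * ((x k : ℤ) - q - 1) :=
    Finset.sum_nonneg fun k _ => hterm k
  have e1 : ∑ k, (x k : ℤ) * ((s : ℤ) - x k) = (s : ℤ) * d - ∑ k, (x k : ℤ) ^ 2 := by
    rw [← hsum', Finset.mul_sum, ← Finset.sum_sub_distrib]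
    exact Finset.sum_congr rfl fun k _ => by ring
  have e2 : ∑ k, ((x k : ℤ) - q) * ((x k : ℤ) - q - 1)
      = (∑ k, (x k : ℤ) ^ 2) - (2 * q + 1) * d + m * ((q : ℤ) * (q + 1)) := by
    have : ∑ k, ((x k : ℤ) - q) * ((x k : ℤ) - q - 1)
        = ∑ k, ((x k : ℤ) ^ 2 - (2 * (q : ℤ) + 1) * (x k : ℤ) + (q : ℤ) * (q + 1)) :=
      Finset.sum_congr rfl fun k _ => by ring
    rw [this, Finset.sum_add_distrib, Finset.sum_sub_distrib, ← Finset.mul_sum, hsum',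
      Finset.sum_const, Finset.card_univ, Fintype.card_fin, nsmul_eq_mul]
  have key : (d : ℤ) * ((m : ℤ) * (s : ℤ) - (d : ℤ)) -
        (m : ℤ) * ∑ k, (x k : ℤ) * ((s : ℤ) - (x k : ℤ)) -
      (r : ℤ) * ((m : ℤ) - (r : ℤ))
      = (m : ℤ) * ∑ k, ((x k : ℤ) - q) * ((x k : ℤ) - q - 1) := by
    rw [e1, e2, hd']
    ring
  have : 0 ≤ (m : ℤ) * ∑ k, ((x k : ℤ) - q) * ((x k : ℤ) - q - 1) :=
    mul_nonneg (by positivity) hpos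
  linarith [key, this]
end

section
/- Let m ≥ 2, s ≥ 1, d = mq + r with 0 ≤ r ≤ m−1, and let x_1,…,x_m be nonnegative integers with Σ x_k = d. Then d(ms − d) − m·Σ x_k(s − x_k) = r(m−r) if and only if exactly r of the x_k equal q+1 and the remaining m−r equal q. -/
open Finset

/-- Equality case of the key inequality of the standard construction: for `d = mq + r` with
`0 ≤ r ≤ m-1` and nonnegative integers `x_1, …, x_m` with `Σ x_k = d`, one has
`d(ms - d) - m Σ x_k (s - x_k) = r(m - r)` if and only if exactly `r` of the `x_k` equal
`q + 1` and the remaining `m - r` equal `q` (the balanced case). -/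
theorem flow_eq_iff_balanced (m s q r d : ℕ) (hm : 2 ≤ m) (hs : 1 ≤ s)
    (hr : r ≤ m - 1) (hd : d = m * q + r)
    (x : Fin m → ℕ) (hsum : ∑ k, x k = d) :
    (d : ℤ) * ((m : ℤ) * (s : ℤ) - (d : ℤ)) -
        (m : ℤ) * ∑ k, (x k : ℤ) * ((s : ℤ) - (x k : ℤ)) =
      (r : ℤ) * ((m : ℤ) - (r : ℤ))
    ↔ ((univ.filter (fun k => x k = q + 1)).card = r ∧
        (univ.filter (fun k => x k = q)).card = m - r) := by
  have hm0 : 0 < m := by omega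
  have hrm : r ≤ m := by omega
  have hS1 : ∑ k, (x k : ℤ) = (d : ℤ) := by exact_mod_cast congrArg Nat.cast hsum
  set A := univ.filter (fun k => x k = q + 1) with hA
  set B := univ.filter (fun k => x k = q) with hB
  have hdisj : Disjoint A B := by
    simp only [Finset.disjoint_left, hA, hB, mem_filter]
    rintro k ⟨_, h1⟩ ⟨_, h2⟩
    omega
  -- key algebraic identity
  have key : (d : ℤ) * ((m : ℤ) * (s : ℤ) - (d : ℤ)) -
        (m : ℤ) * ∑ k, (x k : ℤ) * ((s : ℤ) - (x k : ℤ)) - (r : ℤ) * ((m : ℤ) - (r : ℤ))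
      = (m : ℤ) * ∑ k, ((x k : ℤ) - q) * ((x k : ℤ) - q - 1) := by
    have e1 : ∑ k, (x k : ℤ) * ((s : ℤ) - (x k : ℤ))
        = (s : ℤ) * ∑ k, (x k : ℤ) - ∑ k, ((x k : ℤ))^2 := by
      rw [Finset.mul_sum, ← Finset.sum_sub_distrib]
      exact Finset.sum_congr rfl fun k _ => by ring
    have e2 : ∑ k, ((x k : ℤ) - q) * ((x k : ℤ) - q - 1)
        = ∑ k, ((x k : ℤ))^2 - (2 * (q : ℤ) + 1) * ∑ k, (x k : ℤ)
          + (m : ℤ) * ((q : ℤ) * ((q : ℤ) + 1)) := by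
      rw [Finset.mul_sum, ← Finset.sum_sub_distrib]
      have hc : (m : ℤ) * ((q : ℤ) * ((q : ℤ) + 1)) = ∑ _k : Fin m, (q : ℤ) * ((q : ℤ) + 1) := by
        simp [Finset.sum_const, Finset.card_univ, mul_comm]
      rw [hc, ← Finset.sum_add_distrib]
      exact Finset.sum_congr rfl fun k _ => by ring
    have hd' : (d : ℤ) = (m : ℤ) * q + r := by exact_mod_cast hd
    rw [e1, e2, hS1, hd']
    ring
  constructor
  · intro h
    have hT : ∑ k, ((x k : ℤ) - q) * ((x k : ℤ) - q - 1) = 0 := by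
      have h0 : (m : ℤ) * ∑ k, ((x k : ℤ) - q) * ((x k : ℤ) - q - 1) = 0 := by
        rw [← key]; linarith
      have hm' : (m : ℤ) ≠ 0 := by exact_mod_cast hm0.ne'
      exact (mul_eq_zero.mp h0).resolve_left hm'
    have hnn : ∀ k ∈ (univ : Finset (Fin m)),
        0 ≤ ((x k : ℤ) - q) * ((x k : ℤ) - q - 1) := by
      intro k _
      rcases le_or_gt (x k) q with h1 | h1
      · have h1' : (x k : ℤ) ≤ q := by exact_mod_cast h1
        nlinarith
      · have h1' : (q : ℤ) + 1 ≤ x k := by exact_mod_cast h1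
        nlinarith
    have hterm := (Finset.sum_eq_zero_iff_of_nonneg hnn).mp hT
    have hall : ∀ k, x k = q ∨ x k = q + 1 := by
      intro k
      rcases mul_eq_zero.mp (hterm k (mem_univ k)) with h' | h'
      · left
        have : (x k : ℤ) = q := by linarith
        exact_mod_cast this
      · right
        have : (x k : ℤ) = (q : ℤ) + 1 := by linarith
        exact_mod_cast this
    have hunion : A ∪ B = univ := by
      ext k
      simp only [mem_union, hA, hB, mem_filter, mem_univ, true_and, iff_true]
      rcases hall k with h' | h'
      · right; exact h'
      · left; exact h'
    have hcard : A.card + B.card = m := by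
      rw [← Finset.card_union_of_disjoint hdisj, hunion, card_univ, Fintype.card_fin]
    have hsA : ∑ k ∈ A, x k = A.card * (q + 1) := by
      rw [Finset.sum_congr rfl (fun k hk => (mem_filter.mp hk).2), Finset.sum_const,
        smul_eq_mul]
    have hsB : ∑ k ∈ B, x k = B.card * q := by
      rw [Finset.sum_congr rfl (fun k hk => (mem_filter.mp hk).2), Finset.sum_const,
        smul_eq_mul]
    have h1 : A.card * (q + 1) + B.card * q = m * q + r := by
      rw [← hsA, ← hsB, ← Finset.sum_union hdisj, hunion, hsum, hd]
    have h4 : m * q + A.card = m * q + r := by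
      calc m * q + A.card = A.card * q + B.card * q + A.card := by rw [← add_mul, hcard]
        _ = A.card * (q + 1) + B.card * q := by ring
        _ = m * q + r := h1
    have ha : A.card = r := Nat.add_left_cancel h4
    exact ⟨ha, by omega⟩
  · rintro ⟨ha, hb⟩
    have hcard : (A ∪ B).card = m := by
      rw [Finset.card_union_of_disjoint hdisj, ha, hb]
      omega
    have hunion : A ∪ B = univ := by
      apply Finset.eq_univ_of_card
      rw [hcard, Fintype.card_fin]
    have hall : ∀ k, x k = q ∨ x k = q + 1 := by
      intro k
      have : k ∈ A ∪ B := by rw [hunion]; exact mem_univ k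
      rcases mem_union.mp this with h' | h'
      · right; exact (mem_filter.mp h').2
      · left; exact (mem_filter.mp h').2
    have hT : ∑ k, ((x k : ℤ) - q) * ((x k : ℤ) - q - 1) = 0 := by
      apply Finset.sum_eq_zero
      intro k _
      rcases hall k with h' | h'
      · have : (x k : ℤ) = q := by exact_mod_cast h'
        rw [this]; ring
      · have : (x k : ℤ) = (q : ℤ) + 1 := by exact_mod_cast h'
        rw [this]; ring
    have := key
    rw [hT, mul_zero] at this
    linarith
end

section
/- Let m ≥ 2, s ≥ 1, d = mq + r with 0 ≤ r ≤ m−1, and let x_1,…,x_m be nonnegative integers with Σ x_k = d and x_k ≤ s for all k. If the tuple (x_1,…,x_m) is not balanced (i.e., it is not the case that r of the x_k equal q+1 and m−r equal q), then d(ms − d) − m·Σ x_k(s − x_k) ≥ 2m + r(m − r). -/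
open Finset

/-- If the tuple `(x_1, …, x_m)` (nonnegative integers with `Σ x_k = d = mq + r`, each `x_k ≤ s`)
is not balanced, then `d(ms - d) - m Σ x_k (s - x_k) ≥ 2m + r(m - r)`. -/
theorem flow_ge_of_not_balanced (m s q r d : ℕ) (hm : 2 ≤ m) (hs : 1 ≤ s)
    (hr : r ≤ m - 1) (hd : d = m * q + r)
    (x : Fin m → ℕ) (hsum : ∑ k, x k = d) (hx : ∀ k, x k ≤ s)
    (hnb : ¬ ((univ.filter (fun k => x k = q + 1)).card = r ∧
        (univ.filter (fun k => x k = q)).card = m - r)) :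
    (d : ℤ) * ((m : ℤ) * (s : ℤ) - (d : ℤ)) -
        (m : ℤ) * ∑ k, (x k : ℤ) * ((s : ℤ) - (x k : ℤ)) ≥
      2 * (m : ℤ) + (r : ℤ) * ((m : ℤ) - (r : ℤ)) := by
  -- there exists an index with x k ∉ {q, q+1}
  obtain ⟨k₀, hk₀⟩ : ∃ k, x k ≠ q ∧ x k ≠ q + 1 := by
    by_contra hall
    push_neg at hall
    apply hnb
    set A := univ.filter (fun k => x k = q + 1) with hA
    set B := univ.filter (fun k => x k = q) with hB
    have hdisj : Disjoint A B := by
      rw [Finset.disjoint_left]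
      intro a ha hb
      simp [hA, hB] at ha hb
      omega
    have hunion : A ∪ B = univ := by
      ext k
      simp only [hA, hB, Finset.mem_union, Finset.mem_filter, Finset.mem_univ, true_and]
      have := hall k
      constructor
      · intro; trivial
      · intro _; by_cases h : x k = q
        · right; exact h
        · left; exact this h
    have hcard : A.card + B.card = m := by
      rw [← Finset.card_union_of_disjoint hdisj, hunion, card_univ, Fintype.card_fin]
    have hsA : ∑ k ∈ A, x k = A.card * (q + 1) := by
      rw [Finset.sum_congr rfl (fun k hk => by
        simp only [hA, Finset.mem_filter] at hk; exact hk.2), Finset.sum_const,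
        smul_eq_mul]
    have hsB : ∑ k ∈ B, x k = B.card * q := by
      rw [Finset.sum_congr rfl (fun k hk => by
        simp only [hB, Finset.mem_filter] at hk; exact hk.2), Finset.sum_const,
        smul_eq_mul]
    have hsplit : A.card * (q + 1) + B.card * q = m * q + r := by
      rw [← hsA, ← hsB, ← Finset.sum_union hdisj, hunion, hsum, hd]
    have e3 : A.card * q + B.card * q = m * q := by rw [← add_mul, hcard]
    have har : A.card = r := by nlinarith [hsplit, e3]
    exact ⟨har, by omega⟩
  -- work with y k = x k - q over ℤ
  set y : Fin m → ℤ := fun k => (x k : ℤ) - q with hy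
  have hsy : ∑ k, y k = r := by
    have h1 : ∑ k, (x k : ℤ) = (d : ℤ) := by
      rw [← hsum]; push_cast; ring
    simp only [hy, Finset.sum_sub_distrib, h1, Finset.sum_const, card_univ,
      Fintype.card_fin, smul_eq_mul, hd]
    push_cast; ring
  -- pointwise: y² ≥ y, with +2 at k₀
  have hpt : ∀ k ∈ (univ : Finset (Fin m)), 0 ≤ y k ^ 2 - y k := by
    intro k _
    rcases le_or_gt (y k) 0 with h | h
    · nlinarith
    · nlinarith
  have hk0 : 2 ≤ y k₀ ^ 2 - y k₀ := by
    have h0 : y k₀ ≠ 0 := by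
      simp only [hy, sub_ne_zero]
      exact_mod_cast fun h => hk₀.1 (by exact_mod_cast h)
    have h1 : y k₀ ≠ 1 := by
      intro h
      apply hk₀.2
      have : (x k₀ : ℤ) = q + 1 := by simp only [hy] at h; linarith
      exact_mod_cast this
    rcases lt_trichotomy (y k₀) 0 with h | h | h
    · nlinarith [Int.le_of_lt_add_one (show y k₀ < 0 + 1 by linarith)]
    · exact absurd h h0
    · have : 2 ≤ y k₀ := by omega
      nlinarith
  have hsum2 : (r : ℤ) + 2 ≤ ∑ k, y k ^ 2 := by
    have := Finset.single_le_sum hpt (Finset.mem_univ k₀)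
    have hsub : ∑ k, (y k ^ 2 - y k) = (∑ k, y k ^ 2) - ∑ k, y k :=
      Finset.sum_sub_distrib _ _
    rw [hsub, hsy] at this
    linarith
  -- algebraic identity
  have hxd : ∑ k, (x k : ℤ) = (d : ℤ) := by rw [← hsum]; push_cast; ring
  have e1 : ∑ k, (x k : ℤ) * ((s : ℤ) - (x k : ℤ))
      = (s : ℤ) * d - ∑ k, (x k : ℤ) ^ 2 := by
    rw [← hxd, Finset.mul_sum, ← Finset.sum_sub_distrib]
    exact Finset.sum_congr rfl fun k _ => by ring
  have e2 : ∑ k, y k ^ 2 = (∑ k, (x k : ℤ) ^ 2) - 2 * q * d + m * q ^ 2 := by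
    have : ∀ k ∈ (univ : Finset (Fin m)), y k ^ 2
        = (x k : ℤ) ^ 2 - 2 * (q : ℤ) * (x k : ℤ) + (q : ℤ) ^ 2 := fun k _ => by
      simp only [hy]; ring
    rw [Finset.sum_congr rfl this]
    rw [Finset.sum_add_distrib, Finset.sum_sub_distrib, ← Finset.mul_sum, hxd,
      Finset.sum_const, card_univ, Fintype.card_fin, nsmul_eq_mul]
  have hdz : (d : ℤ) = m * q + r := by exact_mod_cast hd
  have hmul : (m : ℤ) * ((r : ℤ) + 2) ≤ (m : ℤ) * ∑ k, y k ^ 2 :=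
    mul_le_mul_of_nonneg_left hsum2 (by positivity)
  rw [e1]
  nlinarith [hmul, e2, hdz]
end

section
/- Let m ≥ 2 and d_1, …, d_n be integers with 1 ≤ d_i ≤ m−1 and m | Σ d_i. Then there exists a rational-valued weighting w of the complete graph on [n] such that the flow through each vertex i equals d_i(m − d_i), and the flow across each proper partition I ⊔ J = [n] (meaning |I|, |J| ≥ 2) is at least ⟨d(I)⟩_m · ⟨d(J)⟩_m, where d(I) = Σ_{i∈I} d_i and ⟨a⟩_m denotes the representative of a mod m in {0,…,m−1}. -/
open Finset



def Pfun (n : ℕ) (d : Fin n → ℤ) : ℕ → ℤ :=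
  fun t => ∑ j ∈ Finset.range t, (if h : j < n then d ⟨j, h⟩ else 0)

noncomputable def chi (m n : ℕ) (d : Fin n → ℤ) (i : ℕ) (θ : ℤ) : ℤ :=
  ∑ t ∈ Finset.Ico (Pfun n d i) (Pfun n d (i+1)), if t % (m : ℤ) = θ then 1 else 0

lemma Pfun_succ (n : ℕ) (d : Fin n → ℤ) (i : ℕ) :
    Pfun n d (i+1) = Pfun n d i + (if h : i < n then d ⟨i, h⟩ else 0) := by
  simp [Pfun, Finset.sum_range_succ]

lemma count_le_one (m : ℕ) (a b θ : ℤ) (hlen : b - a ≤ m) :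
    (∑ t ∈ Finset.Ico a b, if t % (m : ℤ) = θ then (1:ℤ) else 0) ≤ 1 := by
  rw [Finset.sum_boole]
  have h : ((Finset.Ico a b).filter (fun t => t % (m:ℤ) = θ)).card ≤ 1 := by
    rw [Finset.card_le_one]
    intro x hx y hy
    simp only [Finset.mem_filter, Finset.mem_Ico] at hx hy
    have hdvd : (m:ℤ) ∣ y - x :=
      Int.ModEq.dvd (show x % (m:ℤ) = y % (m:ℤ) from hx.2.trans hy.2.symm)
    obtain ⟨c, hc⟩ := hdvd
    have hm0 : (0:ℤ) ≤ m := by positivity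
    have hc0 : c = 0 := by
      rcases lt_trichotomy c 0 with h|h|h
      · nlinarith [hx.1.1, hx.1.2, hy.1.1, hy.1.2]
      · exact h
      · nlinarith [hx.1.1, hx.1.2, hy.1.1, hy.1.2]
    rw [hc0, mul_zero] at hc
    omega
  exact_mod_cast h

lemma count_nonneg (m : ℕ) (a b θ : ℤ) :
    0 ≤ (∑ t ∈ Finset.Ico a b, if t % (m : ℤ) = θ then (1:ℤ) else 0) :=
  Finset.sum_nonneg fun t _ => by positivity

section
variable (m n : ℕ) (d : Fin n → ℤ)


lemma sum_Ico_consec (f : ℤ → ℤ) {a b c : ℤ} (hab : a ≤ b) (hbc : b ≤ c) :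
    (∑ t ∈ Finset.Ico a b, f t) + ∑ t ∈ Finset.Ico b c, f t = ∑ t ∈ Finset.Ico a c, f t := by
  rw [← Finset.sum_union (Finset.Ico_disjoint_Ico_consecutive a b c),
    Finset.Ico_union_Ico_eq_Ico hab hbc]

-- telescoping sums over consecutive Icos
lemma tele (f : ℤ → ℤ) (P : ℕ → ℤ) (hmono : ∀ i, P i ≤ P (i+1)) (N : ℕ) :
    ∑ i ∈ Finset.range N, ∑ t ∈ Finset.Ico (P i) (P (i+1)), f t
      = ∑ t ∈ Finset.Ico (P 0) (P N), f t := by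
  induction N with
  | zero => simp
  | succ N ih =>
    have h0N : P 0 ≤ P N := by
      clear ih
      induction N with
      | zero => exact le_rfl
      | succ N ih2 => exact ih2.trans (hmono N)
    rw [Finset.sum_range_succ, ih, sum_Ico_consec f h0N (hmono N)]

-- residues in [0, m*k)
lemma count_block (hm : 0 < m) (k : ℕ) (θ : ℤ) (h0 : 0 ≤ θ) (h1 : θ < m) :
    (∑ t ∈ Finset.Ico (0:ℤ) ((m:ℤ)*k), if t % (m:ℤ) = θ then (1:ℤ) else 0) = k := by
  induction k with
  | zero => simp
  | succ k ih =>
    have hmk : (0:ℤ) ≤ (m:ℤ)*k := by positivity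
    have h2 : (m:ℤ)*k ≤ (m:ℤ)*(k+1) := by nlinarith
    have hsplit := sum_Ico_consec (fun t : ℤ => if t % (m:ℤ) = θ then (1:ℤ) else 0) hmk h2
    have hone : (∑ t ∈ Finset.Ico ((m:ℤ)*k) ((m:ℤ)*(k+1)), if t % (m:ℤ) = θ then (1:ℤ) else 0) = 1 := by
      have hle := count_le_one m ((m:ℤ)*k) ((m:ℤ)*(k+1)) θ (by ring_nf; nlinarith)
      have hmem : θ + (m:ℤ)*k ∈ Finset.Ico ((m:ℤ)*k) ((m:ℤ)*(k+1)) := by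
        rw [Finset.mem_Ico]; constructor <;> nlinarith
      have hval : (if (θ + (m:ℤ)*k) % (m:ℤ) = θ then (1:ℤ) else 0) = 1 := by
        rw [if_pos]
        rw [Int.add_mul_emod_self_left]
        exact Int.emod_eq_of_lt h0 h1
      have hge' : (if (θ + (m:ℤ)*k) % (m:ℤ) = θ then (1:ℤ) else 0) ≤
          ∑ t ∈ Finset.Ico ((m:ℤ)*k) ((m:ℤ)*(k+1)), if t % (m:ℤ) = θ then (1:ℤ) else 0 :=
        Finset.single_le_sum (f := fun t => if t % (m:ℤ) = θ then (1:ℤ) else 0)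
          (fun t _ => by positivity) hmem
      rw [hval] at hge'
      omega
    push_cast
    push_cast at ih hsplit hone
    rw [← hsplit, ih, hone]
end

section
variable {m n : ℕ} {d : Fin n → ℤ}

lemma Dlen (hd : ∀ i, 1 ≤ d i ∧ d i ≤ (m:ℤ) - 1) (i : ℕ) :
    0 ≤ Pfun n d (i+1) - Pfun n d i ∧ Pfun n d (i+1) - Pfun n d i ≤ m := by
  rw [Pfun_succ]
  by_cases h : i < n
  · have := hd ⟨i, h⟩
    rw [dif_pos h]
    omega
  · rw [dif_neg h]
    simp [Nat.cast_nonneg]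

lemma Pfun_mono (hd : ∀ i, 1 ≤ d i ∧ d i ≤ (m:ℤ) - 1) (i : ℕ) :
    Pfun n d i ≤ Pfun n d (i+1) := by have := Dlen hd i; omega

lemma chi_nonneg (i : ℕ) (θ : ℤ) : 0 ≤ chi m n d i θ := count_nonneg _ _ _ _

lemma chi_le_one (hd : ∀ i, 1 ≤ d i ∧ d i ≤ (m:ℤ) - 1) (i : ℕ) (θ : ℤ) :
    chi m n d i θ ≤ 1 := count_le_one _ _ _ _ (Dlen hd i).2

lemma chi_sq (hd : ∀ i, 1 ≤ d i ∧ d i ≤ (m:ℤ) - 1) (i : ℕ) (θ : ℤ) :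
    chi m n d i θ * chi m n d i θ = chi m n d i θ := by
  have h1 := chi_nonneg (m := m) (d := d) i θ
  have h2 := chi_le_one hd i θ
  interval_cases h : chi m n d i θ <;> simp

lemma chi_sum_theta (hm : 0 < m) (hd : ∀ i, 1 ≤ d i ∧ d i ≤ (m:ℤ) - 1) (i : ℕ) :
    ∑ θ ∈ Finset.Ico (0:ℤ) (m:ℤ), chi m n d i θ = Pfun n d (i+1) - Pfun n d i := by
  unfold chi
  rw [Finset.sum_comm]
  have hinner : ∀ t : ℤ, (∑ θ ∈ Finset.Ico (0:ℤ) (m:ℤ), if t % (m:ℤ) = θ then (1:ℤ) else 0) = 1 := by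
    intro t
    rw [Finset.sum_ite_eq (Finset.Ico (0:ℤ) (m:ℤ)) (t % (m:ℤ)) (fun _ => (1:ℤ)), if_pos]
    rw [Finset.mem_Ico]
    exact ⟨Int.emod_nonneg t (by positivity), Int.emod_lt_of_pos t (by positivity)⟩
  calc ∑ t ∈ Finset.Ico (Pfun n d i) (Pfun n d (i+1)),
          ∑ θ ∈ Finset.Ico (0:ℤ) (m:ℤ), (if t % (m:ℤ) = θ then (1:ℤ) else 0)
      = ∑ t ∈ Finset.Ico (Pfun n d i) (Pfun n d (i+1)), (1:ℤ) := by
        exact Finset.sum_congr rfl fun t _ => hinner t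
    _ = Pfun n d (i+1) - Pfun n d i := by
        rw [Finset.sum_const, Int.card_Ico, nsmul_eq_mul, mul_one]
        have := Dlen hd i
        omega

lemma chi_sum_theta' (hm : 0 < m) (hd : ∀ i, 1 ≤ d i ∧ d i ≤ (m:ℤ) - 1) (i : Fin n) :
    ∑ θ ∈ Finset.Ico (0:ℤ) (m:ℤ), chi m n d ↑i θ = d i := by
  rw [chi_sum_theta hm hd, Pfun_succ, dif_pos i.isLt]
  simp

lemma coverage (hm : 0 < m) (hd : ∀ i, 1 ≤ d i ∧ d i ≤ (m:ℤ) - 1)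
    (k : ℕ) (hk : ∑ i, d i = (m:ℤ) * k) (θ : ℤ) (h0 : 0 ≤ θ) (h1 : θ < m) :
    ∑ i : Fin n, chi m n d ↑i θ = k := by
  have h2 : ∑ i : Fin n, chi m n d ↑i θ = ∑ i ∈ Finset.range n, chi m n d i θ :=
    Fin.sum_univ_eq_sum_range (fun i => chi m n d i θ) n
  rw [h2]
  unfold chi
  rw [tele _ _ (Pfun_mono hd) n]
  have hP0 : Pfun n d 0 = 0 := by simp [Pfun]
  have hPn : Pfun n d n = (m:ℤ) * k := by
    rw [← hk, Pfun]
    rw [← Fin.sum_univ_eq_sum_range (fun j => if h : j < n then d ⟨j, h⟩ else 0) n]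
    exact Finset.sum_congr rfl fun i _ => by rw [dif_pos i.isLt]
  rw [hP0, hPn]
  exact count_block m hm k θ h0 h1

end

noncomputable def Sfun (m n : ℕ) (d : Fin n → ℤ) (i j : ℕ) : ℤ :=
  ∑ θ ∈ Finset.Ico (0:ℤ) (m:ℤ), chi m n d i θ * chi m n d j θ

noncomputable def wfun (m n : ℕ) (d : Fin n → ℤ) (i j : Fin n) : ℚ :=
  if i = j then 0 else ((d i * d j - m * Sfun m n d ↑i ↑j : ℤ) : ℚ)

lemma int_quad (x q : ℤ) : (2*q+1)*x - q*(q+1) ≤ x*x := by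
  have h : 0 ≤ (x - q) * (x - (q+1)) := by
    rcases le_or_gt x q with h|h
    · have h1 : 0 ≤ q - x := by linarith
      have h2 : 0 ≤ (q+1) - x := by linarith
      nlinarith
    · have h1 : q + 1 ≤ x := h
      exact mul_nonneg (by linarith) (by linarith)
  nlinarith [h]

lemma emod_pair {m : ℤ} (hm : 0 < m) (a b : ℤ) (h : m ∣ a + b) :
    (a % m) * (b % m) ≤ (a % m) * (m - a % m) := by
  have hr0 : 0 ≤ a % m := Int.emod_nonneg a (by omega)
  have hr1 : a % m < m := Int.emod_lt_of_pos a hm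
  have hs0 : 0 ≤ b % m := Int.emod_nonneg b (by omega)
  have hs1 : b % m < m := Int.emod_lt_of_pos b hm
  have hz : (a % m + b % m) % m = 0 := by
    rw [← Int.add_emod]
    exact Int.emod_eq_zero_of_dvd h
  obtain ⟨c, hc⟩ := Int.dvd_of_emod_eq_zero hz
  have hc01 : c = 0 ∨ c = 1 := by
    rcases lt_trichotomy c 0 with h'|h'|h'
    · exfalso; nlinarith
    · left; exact h'
    · rcases lt_or_ge c 2 with h''|h''
      · right; omega
      · exfalso; nlinarith
  rcases hc01 with h'|h'
  · rw [h', mul_zero] at hc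
    have : a % m = 0 := by omega
    simp [this]
  · rw [h', mul_one] at hc
    have : b % m = m - a % m := by omega
    rw [this]

section main
variable {m n : ℕ} {d : Fin n → ℤ}

lemma Sfun_symm (i j : ℕ) : Sfun m n d i j = Sfun m n d j i :=
  Finset.sum_congr rfl fun θ _ => mul_comm _ _

lemma wfun_symm (i j : Fin n) : wfun m n d i j = wfun m n d j i := by
  unfold wfun
  by_cases h : i = j
  · simp [h]
  · rw [if_neg h, if_neg (Ne.symm h), Sfun_symm, mul_comm (d i) (d j)]

lemma Sfun_row (hm : 0 < m) (hd : ∀ i, 1 ≤ d i ∧ d i ≤ (m:ℤ) - 1)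
    (k : ℕ) (hk : ∑ i, d i = (m:ℤ) * k) (i : Fin n) :
    ∑ j : Fin n, Sfun m n d ↑i ↑j = d i * k := by
  unfold Sfun
  rw [Finset.sum_comm]
  have h1 : ∀ θ ∈ Finset.Ico (0:ℤ) (m:ℤ),
      (∑ j : Fin n, chi m n d ↑i θ * chi m n d ↑j θ) = chi m n d ↑i θ * k := by
    intro θ hθ
    rw [Finset.mem_Ico] at hθ
    rw [← Finset.mul_sum, coverage hm hd k hk θ hθ.1 hθ.2]
  rw [Finset.sum_congr rfl h1, ← Finset.sum_mul, chi_sum_theta' hm hd i]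

lemma Sfun_diag (hm : 0 < m) (hd : ∀ i, 1 ≤ d i ∧ d i ≤ (m:ℤ) - 1) (i : Fin n) :
    Sfun m n d ↑i ↑i = d i := by
  unfold Sfun
  rw [Finset.sum_congr rfl fun θ _ => chi_sq hd (↑i) θ]
  exact chi_sum_theta' hm hd i

lemma wfun_row (hm : 0 < m) (hd : ∀ i, 1 ≤ d i ∧ d i ≤ (m:ℤ) - 1)
    (k : ℕ) (hk : ∑ i, d i = (m:ℤ) * k) (i : Fin n) :
    ∑ j, wfun m n d i j = ((d i * ((m : ℤ) - d i) : ℤ) : ℚ) := by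
  have hE : ∑ j : Fin n, (d i * d j - (m:ℤ) * Sfun m n d ↑i ↑j) = 0 := by
    rw [Finset.sum_sub_distrib, ← Finset.mul_sum, ← Finset.mul_sum, hk, Sfun_row hm hd k hk i]
    ring
  have hw : ∀ j : Fin n, wfun m n d i j =
      ((d i * d j - (m:ℤ) * Sfun m n d ↑i ↑j : ℤ) : ℚ)
        - (if i = j then ((d i * d i - (m:ℤ) * Sfun m n d ↑i ↑i : ℤ) : ℚ) else 0) := by
    intro j
    unfold wfun
    by_cases h : i = j
    · subst h; simp
    · rw [if_neg h, if_neg h, sub_zero]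
  rw [Finset.sum_congr rfl fun j _ => hw j, Finset.sum_sub_distrib]
  rw [Finset.sum_ite_eq univ i
    (fun _ => ((d i * d i - (m:ℤ) * Sfun m n d ↑i ↑i : ℤ) : ℚ))]
  rw [if_pos (Finset.mem_univ i)]
  have hcast : ∑ j : Fin n, ((d i * d j - (m:ℤ) * Sfun m n d ↑i ↑j : ℤ) : ℚ)
      = ((∑ j : Fin n, (d i * d j - (m:ℤ) * Sfun m n d ↑i ↑j) : ℤ) : ℚ) := by
    push_cast
    rfl
  rw [hcast, hE, Sfun_diag hm hd i]
  push_cast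
  ring

end main

lemma wfun_cut {m n : ℕ} {d : Fin n → ℤ} (hm : 0 < m) (hd : ∀ i, 1 ≤ d i ∧ d i ≤ (m:ℤ) - 1)
    (k : ℕ) (hk : ∑ i, d i = (m:ℤ) * k) (I : Finset (Fin n)) :
    ∑ i ∈ I, ∑ j ∈ Iᶜ, wfun m n d i j ≥
      ((((∑ i ∈ I, d i) % (m : ℤ)) * ((∑ j ∈ Iᶜ, d j) % (m : ℤ)) : ℤ) : ℚ) := by
  have hmZ : (0:ℤ) < m := by exact_mod_cast hm
  set a := ∑ i ∈ I, d i with ha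
  set b := ∑ j ∈ Iᶜ, d j with hb
  set G : ℤ → ℤ := fun θ => ∑ i ∈ I, chi m n d ↑i θ with hG
  have hab : a + b = (m:ℤ) * k := by
    rw [ha, hb, Finset.sum_add_sum_compl I d, hk]
  have hGa : ∑ θ ∈ Finset.Ico (0:ℤ) (m:ℤ), G θ = a := by
    rw [hG, Finset.sum_comm, ha]
    exact Finset.sum_congr rfl fun i _ => chi_sum_theta' hm hd i
  have hH : ∀ θ ∈ Finset.Ico (0:ℤ) (m:ℤ), ∑ j ∈ Iᶜ, chi m n d ↑j θ = (k:ℤ) - G θ := by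
    intro θ hθ
    rw [Finset.mem_Ico] at hθ
    have h1 := coverage hm hd k hk θ hθ.1 hθ.2
    have h2 := Finset.sum_add_sum_compl I (fun i => chi m n d ↑i θ)
    rw [h1] at h2
    simp only [hG]
    linarith
  have hSc : ∑ i ∈ I, ∑ j ∈ Iᶜ, Sfun m n d ↑i ↑j
      = ∑ θ ∈ Finset.Ico (0:ℤ) (m:ℤ), G θ * ((k:ℤ) - G θ) := by
    have h1 : ∀ i ∈ I, ∑ j ∈ Iᶜ, Sfun m n d ↑i ↑j
        = ∑ θ ∈ Finset.Ico (0:ℤ) (m:ℤ), chi m n d ↑i θ * ((k:ℤ) - G θ) := by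
      intro i _
      unfold Sfun
      rw [Finset.sum_comm]
      refine Finset.sum_congr rfl fun θ hθ => ?_
      rw [← Finset.mul_sum, hH θ hθ]
    rw [Finset.sum_congr rfl h1, Finset.sum_comm]
    exact Finset.sum_congr rfl fun θ _ => by rw [← Finset.sum_mul]
  have hT : ∑ i ∈ I, ∑ j ∈ Iᶜ, (d i * d j - (m:ℤ) * Sfun m n d ↑i ↑j)
      = a * b - (m:ℤ) * ∑ θ ∈ Finset.Ico (0:ℤ) (m:ℤ), G θ * ((k:ℤ) - G θ) := by
    rw [← hSc]
    have h1 : ∀ i ∈ I, ∑ j ∈ Iᶜ, (d i * d j - (m:ℤ) * Sfun m n d ↑i ↑j)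
        = d i * b - (m:ℤ) * ∑ j ∈ Iᶜ, Sfun m n d ↑i ↑j := by
      intro i _
      rw [Finset.sum_sub_distrib, ← Finset.mul_sum, ← Finset.mul_sum, hb]
    rw [Finset.sum_congr rfl h1, Finset.sum_sub_distrib, ← Finset.sum_mul, ← Finset.mul_sum, ha]
  -- the quadratic bound
  have hq : (m:ℤ) * (a / (m:ℤ)) + a % (m:ℤ) = a := Int.mul_ediv_add_emod a m
  set q := a / (m:ℤ) with hqdef
  set r := a % (m:ℤ) with hrdef
  have key : ∑ θ ∈ Finset.Ico (0:ℤ) (m:ℤ), G θ * ((k:ℤ) - G θ)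
      ≤ ((k:ℤ) - (2*q+1)) * a + (m:ℤ) * (q*(q+1)) := by
    have hpt : ∀ θ ∈ Finset.Ico (0:ℤ) (m:ℤ),
        G θ * ((k:ℤ) - G θ) ≤ ((k:ℤ) - (2*q+1)) * G θ + q*(q+1) := by
      intro θ _
      nlinarith [int_quad (G θ) q]
    calc ∑ θ ∈ Finset.Ico (0:ℤ) (m:ℤ), G θ * ((k:ℤ) - G θ)
        ≤ ∑ θ ∈ Finset.Ico (0:ℤ) (m:ℤ), (((k:ℤ) - (2*q+1)) * G θ + q*(q+1)) :=
          Finset.sum_le_sum hpt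
      _ = ((k:ℤ) - (2*q+1)) * a + (m:ℤ) * (q*(q+1)) := by
          rw [Finset.sum_add_distrib, ← Finset.mul_sum, hGa, Finset.sum_const,
            Int.card_Ico, nsmul_eq_mul]
          have hc : ((((m:ℤ) - 0).toNat : ℤ)) = (m:ℤ) := by omega
          rw [hc]
  have hident : a * b - (m:ℤ) * (((k:ℤ) - (2*q+1)) * a + (m:ℤ) * (q*(q+1))) = r * ((m:ℤ) - r) := by
    have hb' : b = (m:ℤ)*k - a := by linarith
    rw [hb']
    linear_combination (a - (m:ℤ)*(q+1) + r) * hq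
  have hfin : r * (b % (m:ℤ)) ≤ a * b - (m:ℤ) * ∑ θ ∈ Finset.Ico (0:ℤ) (m:ℤ), G θ * ((k:ℤ) - G θ) := by
    have h1 : (m:ℤ) * (∑ θ ∈ Finset.Ico (0:ℤ) (m:ℤ), G θ * ((k:ℤ) - G θ))
        ≤ (m:ℤ) * (((k:ℤ) - (2*q+1)) * a + (m:ℤ) * (q*(q+1))) :=
      mul_le_mul_of_nonneg_left key hmZ.le
    have h2 : r * (b % (m:ℤ)) ≤ r * ((m:ℤ) - r) :=
      emod_pair hmZ a b ⟨(k:ℤ), hab⟩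
    linarith
  -- pass to ℚ
  have hcongr : ∑ i ∈ I, ∑ j ∈ Iᶜ, wfun m n d i j
      = ((∑ i ∈ I, ∑ j ∈ Iᶜ, (d i * d j - (m:ℤ) * Sfun m n d ↑i ↑j) : ℤ) : ℚ) := by
    push_cast
    refine Finset.sum_congr rfl fun i hi => Finset.sum_congr rfl fun j hj => ?_
    unfold wfun
    rw [if_neg]
    · push_cast; ring
    · intro h
      exact (Finset.mem_compl.mp hj) (h ▸ hi)
  rw [hcongr, hT, ge_iff_le]
  exact_mod_cast hfin


/-- The standard construction: if `1 ≤ d_i ≤ m - 1` and `m ∣ Σ d_i`, there exists a rational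
weighting of the complete graph on `[n]` (a symmetric function with zero diagonal) such that
the flow through each vertex `i` is `d_i (m - d_i)` and the flow across every proper partition
`I ⊔ Iᶜ` is at least `⟨d(I)⟩_m ⟨d(Iᶜ)⟩_m`. -/
theorem standard_construction {n : ℕ} (m : ℕ) (hm : 2 ≤ m) (d : Fin n → ℤ)
    (hd : ∀ i, 1 ≤ d i ∧ d i ≤ (m : ℤ) - 1) (hdiv : (m : ℤ) ∣ ∑ i, d i) :
    ∃ w : Fin n → Fin n → ℚ,
      (∀ i j, w i j = w j i) ∧ (∀ i, w i i = 0) ∧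
      (∀ i, ∑ j, w i j = ((d i * ((m : ℤ) - d i) : ℤ) : ℚ)) ∧
      (∀ I : Finset (Fin n), 2 ≤ I.card → 2 ≤ Iᶜ.card →
        ∑ i ∈ I, ∑ j ∈ Iᶜ, w i j ≥
          ((((∑ i ∈ I, d i) % (m : ℤ)) * ((∑ j ∈ Iᶜ, d j) % (m : ℤ)) : ℤ) : ℚ)) := by
  have hm0 : 0 < m := by omega
  obtain ⟨kz, hkz⟩ := hdiv
  have hs0 : (0:ℤ) ≤ ∑ i, d i := Finset.sum_nonneg fun i _ => le_trans zero_le_one (hd i).1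
  have hmZ : (0:ℤ) < m := by exact_mod_cast hm0
  have hkz0 : 0 ≤ kz := by nlinarith
  lift kz to ℕ using hkz0 with k hk2
  exact ⟨wfun m n d, fun i j => wfun_symm i j, fun i => by simp [wfun],
    fun i => wfun_row hm0 hd k hkz i, fun I _ _ => wfun_cut hm0 hd k hkz I⟩
end

section
/- Let n ≥ 4 and let D = Σᵢ aᵢψᵢ − Σ_{I,J} b_{I,J} Δ_{I,J} be a divisor class on the moduli space of stable n-pointed rational curves, written in terms of cotangent classes ψᵢ and boundary classes Δ_{I,J} indexed by proper partitions I ⊔ J = [n]. Then D is ℚ-linearly equivalent to Σ_{I,J} c_{I,J} Δ_{I,J} if and only if there is a ℚ-valued weighting w of the complete graph on [n] with w(i) = aᵢ for every vertex i and w(I|J) = b_{I,J} + c_{I,J} for every proper partition I ⊔ J. -/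
open Finset

/-- The ambient ℚ-vector space freely generated by the symbols `ψ_i` (for `i : Fin n`) and
`Δ_I` (for `I : Finset (Fin n)`; only proper subsets in canonical position are used). -/
abbrev Amb (n : ℕ) := (Fin n ⊕ Finset (Fin n)) →₀ ℚ

noncomputable def psi {n : ℕ} (i : Fin n) : Amb n := Finsupp.single (Sum.inl i) 1

noncomputable def delta {n : ℕ} (I : Finset (Fin n)) : Amb n := Finsupp.single (Sum.inr I) 1

/-- Canonical representatives of proper partitions `I ⊔ J = [n]` (`|I|, |J| ≥ 2`): the part
containing the vertex with value `0`. -/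
def reps (n : ℕ) : Finset (Finset (Fin n)) :=
  univ.filter (fun I => 2 ≤ I.card ∧ 2 ≤ Iᶜ.card ∧ ∀ j : Fin n, (j : ℕ) = 0 → j ∈ I)

/-- The span of the Keel relations `ψ_i + ψ_j = Σ_{i ∈ I, j ∈ J} Δ_{I,J}` for `i ≠ j`. -/
noncomputable def keelRels (n : ℕ) : Submodule ℚ (Amb n) :=
  Submodule.span ℚ
    {x | ∃ i j : Fin n, i ≠ j ∧
      x = psi i + psi j -
        ∑ I ∈ (reps n).filter (fun I => (i ∈ I ∧ j ∉ I) ∨ (j ∈ I ∧ i ∉ I)), delta I}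

section Aux

variable {n : ℕ}

noncomputable def rel (i j : Fin n) : Amb n :=
  psi i + psi j -
    ∑ I ∈ (reps n).filter (fun I => (i ∈ I ∧ j ∉ I) ∨ (j ∈ I ∧ i ∉ I)), delta I

noncomputable def Fv (n : ℕ) (p : Fin n × Fin n) : Amb n :=
  if p.1 = p.2 then 0 else rel p.1 p.2

lemma keelRels_eq (n : ℕ) : keelRels n = Submodule.span ℚ (Set.range (Fv n)) := by
  apply le_antisymm
  · apply Submodule.span_le.2
    rintro x ⟨i, j, hij, rfl⟩
    exact Submodule.subset_span ⟨(i, j), by simp [Fv, hij, rel]⟩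
  · apply Submodule.span_le.2
    rintro x ⟨⟨i, j⟩, rfl⟩
    by_cases h : i = j
    · simp [Fv, h]
    · exact Submodule.subset_span ⟨i, j, h, by simp [Fv, h, rel]⟩

lemma rel_inl (i j k : Fin n) :
    rel i j (Sum.inl k) = (if i = k then 1 else 0) + (if j = k then 1 else 0) := by
  simp [rel, psi, delta, Finsupp.single_apply, Finsupp.finset_sum_apply]

lemma rel_inr (i j : Fin n) (I : Finset (Fin n)) :
    rel i j (Sum.inr I) =
      -(if I ∈ (reps n).filter (fun I => (i ∈ I ∧ j ∉ I) ∨ (j ∈ I ∧ i ∉ I)) then 1 else 0) := by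
  simp [rel, psi, delta, Finsupp.single_apply, Finsupp.finset_sum_apply,
    Finset.sum_ite_eq']

lemma Fv_inl (i j k : Fin n) :
    Fv n (i, j) (Sum.inl k) =
      if i = j then 0 else ((if i = k then 1 else 0) + (if j = k then 1 else 0)) := by
  unfold Fv; split <;> simp_all [rel_inl]

lemma Fv_inr (i j : Fin n) (I : Finset (Fin n)) :
    Fv n (i, j) (Sum.inr I) =
      if i = j then 0 else
        -(if I ∈ (reps n).filter (fun I => (i ∈ I ∧ j ∉ I) ∨ (j ∈ I ∧ i ∉ I)) then 1 else 0) := by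
  unfold Fv; split <;> simp_all [rel_inr]

lemma L1 (t : Fin n × Fin n → ℚ) (k : Fin n) :
    ∑ p : Fin n × Fin n, t p * Fv n p (Sum.inl k) =
      ∑ j, (if k = j then 0 else t (k, j) + t (j, k)) := by
  rw [Fintype.sum_prod_type]
  have step : ∀ i j : Fin n, t (i, j) * Fv n (i, j) (Sum.inl k) =
      (if i = k then (if j = k then 0 else t (i, j)) else 0) +
      (if j = k then (if i = k then 0 else t (i, j)) else 0) := by
    intro i j
    rw [Fv_inl]
    split_ifs <;> simp_all <;> ring
  simp_rw [step, Finset.sum_add_distrib]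
  rw [Finset.sum_comm]
  simp_rw [Finset.sum_ite_eq', if_pos (Finset.mem_univ k)]
  rw [← Finset.sum_add_distrib]
  apply Finset.sum_congr rfl
  intro j _
  by_cases h : j = k
  · simp [h]
  · rw [if_neg h, if_neg h, if_neg (Ne.symm h)]

lemma L2 (t : Fin n × Fin n → ℚ) {I : Finset (Fin n)} (hI : I ∈ reps n) :
    ∑ p : Fin n × Fin n, t p * Fv n p (Sum.inr I) =
      -∑ i ∈ I, ∑ j ∈ Iᶜ, (t (i, j) + t (j, i)) := by
  rw [Fintype.sum_prod_type]
  have step : ∀ i j : Fin n, t (i, j) * Fv n (i, j) (Sum.inr I) =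
      -((if i ∈ I then (if j ∈ Iᶜ then t (i, j) else 0) else 0) +
        (if j ∈ I then (if i ∈ Iᶜ then t (i, j) else 0) else 0)) := by
    intro i j
    rw [Fv_inr]
    simp only [Finset.mem_filter, hI, true_and, Finset.mem_compl]
    by_cases hij : i = j
    · subst hij
      by_cases h : i ∈ I <;> simp [h]
    · rw [if_neg hij]
      by_cases h1 : i ∈ I <;> by_cases h2 : j ∈ I <;> simp [h1, h2, hij] <;> ring
  simp_rw [step, Finset.sum_neg_distrib]
  rw [neg_inj]
  simp_rw [Finset.sum_add_distrib]
  have inner1 : ∀ i : Fin n, ∑ j : Fin n,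
      (if i ∈ I then (if j ∈ Iᶜ then t (i, j) else 0) else 0) =
      if i ∈ I then ∑ j ∈ Iᶜ, t (i, j) else 0 := by
    intro i
    by_cases h : i ∈ I
    · simp only [h, if_true]; rw [Finset.sum_ite_mem, univ_inter]
    · simp [h]
  have inner2 : ∀ j : Fin n, ∑ i : Fin n,
      (if j ∈ I then (if i ∈ Iᶜ then t (i, j) else 0) else 0) =
      if j ∈ I then ∑ i ∈ Iᶜ, t (i, j) else 0 := by
    intro j
    by_cases h : j ∈ I
    · simp only [h, if_true]; rw [Finset.sum_ite_mem, univ_inter]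
    · simp [h]
  rw [Finset.sum_comm (f := fun i j =>
      (if j ∈ I then (if i ∈ Iᶜ then t (i, j) else 0) else 0))]
  simp_rw [inner1, inner2, Finset.sum_ite_mem, univ_inter]

lemma L3 (t : Fin n × Fin n → ℚ) {I : Finset (Fin n)} (hI : I ∉ reps n) :
    ∑ p : Fin n × Fin n, t p * Fv n p (Sum.inr I) = 0 := by
  apply Finset.sum_eq_zero
  rintro ⟨i, j⟩ _
  rw [Fv_inr]
  have : I ∉ (reps n).filter (fun I => (i ∈ I ∧ j ∉ I) ∨ (j ∈ I ∧ i ∉ I)) := by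
    simp only [Finset.mem_filter]; tauto
  simp [this]

lemma sum_smul_Fv_apply (t : Fin n × Fin n → ℚ) (s : Fin n ⊕ Finset (Fin n)) :
    (∑ p : Fin n × Fin n, t p • Fv n p) s = ∑ p : Fin n × Fin n, t p * Fv n p s := by
  rw [Finsupp.finset_sum_apply]
  exact Finset.sum_congr rfl fun p _ => rfl

lemma D_inl (a : Fin n → ℚ) (b c : Finset (Fin n) → ℚ) (k : Fin n) :
    ((∑ i, a i • psi i - ∑ I ∈ reps n, b I • delta I) - ∑ I ∈ reps n, c I • delta I)
      (Sum.inl k) = a k := by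
  simp [Finsupp.sub_apply, Finsupp.finset_sum_apply, psi, delta,
    Finsupp.single_apply, Finset.sum_ite_eq']

lemma D_inr (a : Fin n → ℚ) (b c : Finset (Fin n) → ℚ) (J : Finset (Fin n)) :
    ((∑ i, a i • psi i - ∑ I ∈ reps n, b I • delta I) - ∑ I ∈ reps n, c I • delta I)
      (Sum.inr J) = if J ∈ reps n then -(b J + c J) else 0 := by
  simp only [Finsupp.sub_apply, Finsupp.finset_sum_apply, Finsupp.smul_apply, psi, delta,
    Finsupp.single_apply, smul_eq_mul]
  simp only [reduceCtorEq, if_false, mul_zero, Finset.sum_const_zero, zero_sub,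
    Sum.inr.injEq, mul_ite, mul_one]
  rw [Finset.sum_ite_eq', Finset.sum_ite_eq']
  by_cases h : J ∈ reps n <;> simp [h] <;> ring

end Aux

/-- Effectivity criterion: the divisor `D = Σ a_i ψ_i - Σ b_I Δ_I` is ℚ-linearly equivalent
(modulo the Keel relations) to `Σ c_I Δ_I` if and only if there is a ℚ-valued weighting `w`
of the complete graph on `[n]` with flow `a_i` through each vertex `i` and flow `b_I + c_I`
across each proper partition `I ⊔ Iᶜ`. -/
theorem effectivity_criterion {n : ℕ} (hn : 4 ≤ n) (a : Fin n → ℚ)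
    (b c : Finset (Fin n) → ℚ) :
    ((∑ i, a i • psi i - ∑ I ∈ reps n, b I • delta I) - ∑ I ∈ reps n, c I • delta I)
        ∈ keelRels n
    ↔ ∃ w : Fin n → Fin n → ℚ,
        (∀ i j, w i j = w j i) ∧ (∀ i, w i i = 0) ∧
        (∀ i, ∑ j, w i j = a i) ∧
        (∀ I ∈ reps n, ∑ i ∈ I, ∑ j ∈ Iᶜ, w i j = b I + c I) := by
  rw [keelRels_eq, Submodule.mem_span_range_iff_exists_fun]
  constructor
  · rintro ⟨t, ht⟩
    refine ⟨fun i j => if i = j then 0 else t (i, j) + t (j, i), ?_, ?_, ?_, ?_⟩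
    · intro i j
      dsimp only
      by_cases h : i = j
      · simp [h]
      · rw [if_neg h, if_neg (Ne.symm h)]; ring
    · intro i; simp
    · intro k
      have h := congrArg (fun f : Amb n => f (Sum.inl k)) ht
      simp only [sum_smul_Fv_apply] at h
      rw [L1, D_inl a b c k] at h
      simpa using h
    · intro I hI
      have h := congrArg (fun f : Amb n => f (Sum.inr I)) ht
      simp only [sum_smul_Fv_apply] at h
      rw [L2 t hI, D_inr a b c I, if_pos hI] at h
      have h2 := neg_injective h
      rw [← h2]
      apply Finset.sum_congr rfl; intro i hi
      apply Finset.sum_congr rfl; intro j hj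
      have hij : i ≠ j := fun hh => (Finset.mem_compl.1 hj) (hh ▸ hi)
      simp [hij]
  · rintro ⟨w, hsym, hdiag, ha, hb⟩
    refine ⟨fun p => w p.1 p.2 / 2, ?_⟩
    ext s
    rw [sum_smul_Fv_apply]
    cases s with
    | inl k =>
      rw [L1, D_inl a b c k, ← ha k]
      apply Finset.sum_congr rfl; intro j _
      by_cases h : k = j
      · rw [if_pos h, ← h, hdiag]
      · rw [if_neg h, hsym j k]; ring
    | inr I =>
      by_cases hI : I ∈ reps n
      · rw [L2 _ hI, D_inr a b c I, if_pos hI, ← hb I hI, neg_inj]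
        refine Finset.sum_congr rfl fun i _ => Finset.sum_congr rfl fun j _ => ?_
        rw [hsym j i]; ring
      · rw [L3 _ hI, D_inr a b c I, if_neg hI]
end

section
/- Let m ≥ 2 divide Σᵢ dᵢ. The divisor D((d_1,…,d_n), m) = Σᵢ ⟨dᵢ⟩_m⟨m−dᵢ⟩_m ψᵢ − Σ_{I,J} ⟨d(I)⟩_m⟨d(J)⟩_m Δ_{I,J} on M̄_{0,n}, with 1 ≤ dᵢ ≤ m−1 for all i, is ℚ-linearly equivalent to an effective combination of the boundary divisors Δ_{I,J}. -/
open Finset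

def ffz (M a : ℤ) : ℤ := (a % M) * ((-a) % M)

lemma ffz_nonneg {M : ℤ} (hM : 0 < M) (a : ℤ) : 0 ≤ ffz M a :=
  mul_nonneg (Int.emod_nonneg _ hM.ne') (Int.emod_nonneg _ hM.ne')

lemma ffz_congr {M a b : ℤ} (h : M ∣ (a - b)) : ffz M a = ffz M b := by
  have h1 : a % M = b % M := Int.ModEq.symm (Int.modEq_iff_dvd.mpr (by simpa using h))
  have h2 : (-a) % M = (-b) % M :=
    Int.ModEq.symm (Int.modEq_iff_dvd.mpr (by rw [show -a - -b = -(a-b) by ring]; exact dvd_neg.mpr h))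
  simp [ffz, h1, h2]

lemma ffz_eval {M a : ℤ} (hM : 0 < M) (h0 : 0 ≤ a) (h1 : a < M) :
    ffz M a = a * (M - a) := by
  have ha : a % M = a := Int.emod_eq_of_lt h0 h1
  rcases eq_or_lt_of_le h0 with h | h
  · simp [ffz, ← h]
  · have hb : (-a) % M = M - a := by
      have : (-a) % M = (M - a) % M :=
        Int.ModEq.symm (Int.modEq_iff_dvd.mpr ⟨-1, by ring⟩)
      rw [this, Int.emod_eq_of_lt (by omega) (by omega)]
    rw [ffz, ha, hb]

lemma ffz_eq_zero_iff {M a : ℤ} (hM : 0 < M) : ffz M a = 0 ↔ M ∣ a := by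
  constructor
  · intro h
    rcases mul_eq_zero.mp h with h | h
    · exact Int.dvd_of_emod_eq_zero h
    · exact dvd_neg.mp (Int.dvd_of_emod_eq_zero h)
  · intro h
    have : a % M = 0 := Int.emod_eq_zero_of_dvd h
    simp [ffz, this]

lemma ffz_subadd {M : ℤ} (hM : 0 < M) (a b : ℤ) :
    ffz M (a + b) ≤ ffz M a + ffz M b := by
  set u := a % M with hu
  set v := b % M with hv
  have hu0 : 0 ≤ u := Int.emod_nonneg _ hM.ne'
  have hu1 : u < M := Int.emod_lt_of_pos _ hM
  have hv0 : 0 ≤ v := Int.emod_nonneg _ hM.ne'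
  have hv1 : v < M := Int.emod_lt_of_pos _ hM
  have ea : ffz M a = u * (M - u) := by
    rw [ffz_congr (Int.dvd_self_sub_of_emod_eq rfl), ffz_eval hM hu0 hu1]
  have eb : ffz M b = v * (M - v) := by
    rw [ffz_congr (Int.dvd_self_sub_of_emod_eq rfl), ffz_eval hM hv0 hv1]
  have eab : ffz M (a + b) = ffz M (u + v) := by
    refine ffz_congr ?_
    have : M ∣ a - u + (b - v) := dvd_add (Int.dvd_self_sub_of_emod_eq (rfl : a % M = u)) (Int.dvd_self_sub_of_emod_eq (rfl : b % M = v))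
    simpa [show a - u + (b - v) = (a+b) - (u+v) by ring] using this
  rcases lt_or_ge (u + v) M with c | c
  · rw [eab, ffz_eval hM (by omega) c, ea, eb]; nlinarith [mul_nonneg hu0 hv0]
  · have : ffz M (u + v) = (u + v - M) * (M - (u + v - M)) := by
      rw [ffz_congr (show M ∣ (u+v) - (u+v-M) from ⟨1, by ring⟩), ffz_eval hM (by omega) (by omega)]
    rw [eab, this, ea, eb]
    nlinarith [mul_nonneg (show (0:ℤ) ≤ M - u by omega) (show (0:ℤ) ≤ M - v by omega)]

set_option maxHeartbeats 2000000 in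
lemma ffz_key {M : ℤ} (hM : 0 < M) (p q x : ℤ) (h : ¬ M ∣ (p + q)) :
    2 * ffz M (p+q) * ffz M (x+p) ≤
      (ffz M p + ffz M (p+q) - ffz M q) * ffz M (x+p+q)
      + (ffz M q + ffz M (p+q) - ffz M p) * ffz M x
      + (ffz M p + ffz M q - ffz M (p+q)) * ffz M (p+q) := by
  set u := p % M with hu
  set v := q % M with hv
  set w := x % M with hw
  have hu0 : 0 ≤ u := Int.emod_nonneg _ hM.ne'
  have hu1 : u < M := Int.emod_lt_of_pos _ hM
  have hv0 : 0 ≤ v := Int.emod_nonneg _ hM.ne'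
  have hv1 : v < M := Int.emod_lt_of_pos _ hM
  have hw0 : 0 ≤ w := Int.emod_nonneg _ hM.ne'
  have hw1 : w < M := Int.emod_lt_of_pos _ hM
  have dp : M ∣ p - u := Int.dvd_self_sub_of_emod_eq rfl
  have dq : M ∣ q - v := Int.dvd_self_sub_of_emod_eq rfl
  have dx : M ∣ x - w := Int.dvd_self_sub_of_emod_eq rfl
  have hnd : ¬ M ∣ (u + v) := by
    intro hc
    exact h (by have : M ∣ (p + q) - (u + v) := by
                  have := dvd_add dp dq
                  simpa [show p - u + (q - v) = (p+q) - (u+v) by ring] using this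
                have := dvd_add this hc; simpa using this)
  have ep : ffz M p = u * (M - u) := by rw [ffz_congr dp, ffz_eval hM hu0 hu1]
  have eq' : ffz M q = v * (M - v) := by rw [ffz_congr dq, ffz_eval hM hv0 hv1]
  have ex : ffz M x = w * (M - w) := by rw [ffz_congr dx, ffz_eval hM hw0 hw1]
  have epq : ffz M (p+q) = ffz M (u+v) := by
    refine ffz_congr ?_
    have := dvd_add dp dq
    simpa [show p - u + (q - v) = (p+q) - (u+v) by ring] using this
  have exp : ffz M (x+p) = ffz M (w+u) := by
    refine ffz_congr ?_
    have := dvd_add dx dp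
    simpa [show x - w + (p - u) = (x+p) - (w+u) by ring] using this
  have expq : ffz M (x+p+q) = ffz M (w+u+v) := by
    refine ffz_congr ?_
    have := dvd_add (dvd_add dx dp) dq
    simpa [show x - w + (p - u) + (q - v) = (x+p+q) - (w+u+v) by ring] using this
  have huv0 : u + v ≠ 0 := fun hc => hnd (by simp [hc])
  have huvM : u + v ≠ M := fun hc => hnd (by simp [hc])
  rw [ep, eq', ex, epq, exp, expq]
  rcases lt_or_ge (u + v) M with c1 | c1
  · -- no carry in p+q
    have eR : ffz M (u+v) = (u+v) * (M - (u+v)) := ffz_eval hM (by omega) c1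
    rcases lt_or_ge (w + u) M with c2 | c2
    · have eY : ffz M (w+u) = (w+u) * (M - (w+u)) := ffz_eval hM (by omega) c2
      rcases lt_or_ge (w + u + v) M with c3 | c3
      · have eZ : ffz M (w+u+v) = (w+u+v) * (M - (w+u+v)) := ffz_eval hM (by omega) c3
        rw [eR, eY, eZ]; nlinarith []
      · have eZ : ffz M (w+u+v) = (w+u+v-M) * (M - (w+u+v-M)) := by
          rw [ffz_congr (show M ∣ (w+u+v) - (w+u+v-M) from ⟨1, by ring⟩), ffz_eval hM (by omega) (by omega)]
        rw [eR, eY, eZ]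
        nlinarith [mul_nonneg (mul_nonneg (mul_nonneg hM.le hu0)
          (show (0:ℤ) ≤ M - u - v by omega)) (show (0:ℤ) ≤ w + u + v - M by omega)]
    · have eY : ffz M (w+u) = (w+u-M) * (M - (w+u-M)) := by
        rw [ffz_congr (show M ∣ (w+u) - (w+u-M) from ⟨1, by ring⟩), ffz_eval hM (by omega) (by omega)]
      have eZ : ffz M (w+u+v) = (w+u+v-M) * (M - (w+u+v-M)) := by
        rw [ffz_congr (show M ∣ (w+u+v) - (w+u+v-M) from ⟨1, by ring⟩), ffz_eval hM (by omega) (by omega)]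
      rw [eR, eY, eZ]
      nlinarith [mul_nonneg (mul_nonneg (mul_nonneg hM.le hv0)
        (show (0:ℤ) ≤ M - w by omega)) (show (0:ℤ) ≤ M - u - v by omega)]
  · -- carry in p+q
    have eR : ffz M (u+v) = (u+v-M) * (M - (u+v-M)) := by
      rw [ffz_congr (show M ∣ (u+v) - (u+v-M) from ⟨1, by ring⟩), ffz_eval hM (by omega) (by omega)]
    rcases lt_or_ge (w + u) M with c2 | c2
    · have eY : ffz M (w+u) = (w+u) * (M - (w+u)) := ffz_eval hM (by omega) c2
      have eZ : ffz M (w+u+v) = (w+u+v-M) * (M - (w+u+v-M)) := by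
        rw [ffz_congr (show M ∣ (w+u+v) - (w+u+v-M) from ⟨1, by ring⟩), ffz_eval hM (by omega) (by omega)]
      rw [eR, eY, eZ]
      nlinarith [mul_nonneg (mul_nonneg (mul_nonneg hM.le hw0)
        (show (0:ℤ) ≤ M - v by omega)) (show (0:ℤ) ≤ u + v - M by omega)]
    · have eY : ffz M (w+u) = (w+u-M) * (M - (w+u-M)) := by
        rw [ffz_congr (show M ∣ (w+u) - (w+u-M) from ⟨1, by ring⟩), ffz_eval hM (by omega) (by omega)]
      rcases lt_or_ge (w + u + v) (2*M) with c3 | c3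
      · have eZ : ffz M (w+u+v) = (w+u+v-M) * (M - (w+u+v-M)) := by
          rw [ffz_congr (show M ∣ (w+u+v) - (w+u+v-M) from ⟨1, by ring⟩), ffz_eval hM (by omega) (by omega)]
        rw [eR, eY, eZ]
        nlinarith [mul_nonneg (mul_nonneg (mul_nonneg hM.le
          (show (0:ℤ) ≤ M - u by omega)) (show (0:ℤ) ≤ u + v - M by omega))
          (show (0:ℤ) ≤ 2*M - u - v - w by omega)]
      · have eZ : ffz M (w+u+v) = (w+u+v-2*M) * (M - (w+u+v-2*M)) := by
          rw [ffz_congr (show M ∣ (w+u+v) - (w+u+v-2*M) by exact ⟨2, by ring⟩),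
            ffz_eval hM (by omega) (by omega)]
        rw [eR, eY, eZ]
        nlinarith []
lemma ffz_neg {M a : ℤ} : ffz M (-a) = ffz M a := by
  simp [ffz, mul_comm]

lemma ffz_sub_le {M : ℤ} (hM : 0 < M) (a b : ℤ) :
    ffz M a ≤ ffz M (a + b) + ffz M b := by
  have h := ffz_subadd hM (a + b) (-b)
  rwa [show a + b + -b = a by ring, ffz_neg] at h

set_option maxHeartbeats 4000000 in
lemma graph {ι : Type*} [DecidableEq ι] {M : ℤ} (hM : 0 < M) :
    ∀ (V : Finset ι) (d : ι → ℤ), (M ∣ ∑ i ∈ V, d i) →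
    ∃ t : ι → ι → ℚ, (∀ i j, 0 ≤ t i j) ∧ (∀ i j, t i j = t j i) ∧ (∀ i, t i i = 0) ∧
      (∀ i ∈ V, ∑ j ∈ V.erase i, t i j = (ffz M (d i) : ℚ)) ∧
      (∀ I ⊆ V, ((ffz M (∑ i ∈ I, d i) : ℚ)) ≤ ∑ i ∈ I, ∑ j ∈ V \ I, t i j) := by
  intro V
  induction V using Finset.strongInduction with
  | _ V ih =>
  intro d hdvd
  by_cases hcard : V.card ≤ 1
  · -- base case
    refine ⟨fun _ _ => 0, fun _ _ => le_refl 0, fun _ _ => rfl, fun _ => rfl, ?_, ?_⟩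
    · intro i hi
      have hV : V = {i} := by
        have h1 : 1 ≤ V.card := Finset.card_pos.mpr ⟨i, hi⟩
        have h2 : V.card = 1 := le_antisymm hcard h1
        obtain ⟨x, hx⟩ := Finset.card_eq_one.mp h2
        subst hx
        have : i = x := by simpa using hi
        simp [this]
      have : M ∣ d i := by
        rw [hV, Finset.sum_singleton] at hdvd
        exact hdvd
      simp [(ffz_eq_zero_iff hM).mpr this]
    · intro I hI
      have : ffz M (∑ i ∈ I, d i) = 0 := by
        rcases I.eq_empty_or_nonempty with h | h
        · subst h; simp [(ffz_eq_zero_iff hM).mpr (dvd_zero M)]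
        · have hIV : I = V := Finset.eq_of_subset_of_card_le hI
            (le_trans hcard (Finset.card_pos.mpr h))
          subst hIV
          exact (ffz_eq_zero_iff hM).mpr hdvd
      simp [this]
  · -- inductive step
    push_neg at hcard
    obtain ⟨a, ha, b, hb, hab⟩ := Finset.one_lt_card.mp hcard
    set V' := V.erase b with hV'
    set d' := Function.update d a (d a + d b) with hd'
    have ha' : a ∈ V' := Finset.mem_erase.mpr ⟨hab, ha⟩
    have hsub : V' ⊂ V := Finset.erase_ssubset hb
    have hba : b ∉ V' := Finset.notMem_erase b V
    have herase : ∀ x ∈ V'.erase a, d' x = d x := by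
      intro x hx
      exact Function.update_of_ne (Finset.mem_erase.mp hx).1 _ d
    have hsum' : ∑ i ∈ V', d' i = ∑ i ∈ V, d i := by
      rw [← Finset.add_sum_erase V' d' ha', ← Finset.add_sum_erase V d hb,
        ← Finset.add_sum_erase V' d (Finset.mem_erase.mpr ⟨hab, ha⟩)]
      rw [Finset.sum_congr rfl herase]
      simp [d', Function.update_self]
      ring
    obtain ⟨t', h0', hsym', hdiag', hrow', hcut'⟩ := ih V' hsub d' (hsum' ▸ hdvd)
    set P : ℚ := (ffz M (d a) : ℚ) with hPdef
    set Q : ℚ := (ffz M (d b) : ℚ) with hQdef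
    set R : ℚ := (ffz M (d a + d b) : ℚ) with hRdef
    set δ : ℚ := (P + Q - R) / 2 with hδdef
    set α : ℚ := if R = 0 then 0 else (P + R - Q) / (2 * R) with hαdef
    have hP0 : 0 ≤ P := by rw [hPdef]; exact_mod_cast ffz_nonneg hM _
    have hQ0 : 0 ≤ Q := by rw [hQdef]; exact_mod_cast ffz_nonneg hM _
    have hR0 : 0 ≤ R := by rw [hRdef]; exact_mod_cast ffz_nonneg hM _
    have hsub1 : R ≤ P + Q := by rw [hPdef, hQdef, hRdef]; exact_mod_cast ffz_subadd hM (d a) (d b)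
    have hsub2 : P ≤ R + Q := by rw [hPdef, hQdef, hRdef]; exact_mod_cast ffz_sub_le hM (d a) (d b)
    have hsub3 : Q ≤ R + P := by
      have h := ffz_sub_le hM (d b) (d a)
      rw [show d b + d a = d a + d b by ring] at h
      rw [hPdef, hQdef, hRdef]
      exact_mod_cast h
    have hδ0 : 0 ≤ δ := by rw [hδdef]; linarith
    have hα0 : 0 ≤ α := by
      rw [hαdef]
      split_ifs with hR
      · exact le_refl 0
      · exact div_nonneg (by linarith) (by linarith)
    have hα1 : α ≤ 1 := by
      rw [hαdef]
      split_ifs with hR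
      · norm_num
      · rw [div_le_one (by rcases lt_or_eq_of_le hR0 with h | h; linarith; exact absurd h.symm hR)]
        linarith
    have hPQR0 : R = 0 → P = Q := by
      intro hR
      have hdvdab : M ∣ d a + d b := (ffz_eq_zero_iff hM).mp (by rw [hRdef] at hR; exact_mod_cast hR)
      have : ffz M (d a) = ffz M (d b) := by
        rw [← ffz_neg (a := d b)]
        exact ffz_congr (by simpa [show d a - -d b = d a + d b by ring] using hdvdab)
      rw [hPdef, hQdef, this]
    have hrowα : δ + α * R = P := by
      by_cases hR : R = 0
      · rw [hαdef, if_pos hR, hδdef, hR, hPQR0 hR]; ring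
      · rw [hαdef, if_neg hR, hδdef]; field_simp; ring
    have hrowβ : δ + (1 - α) * R = Q := by
      by_cases hR : R = 0
      · rw [hαdef, if_pos hR, hδdef, hR, hPQR0 hR]; ring
      · rw [hαdef, if_neg hR, hδdef]; field_simp; ring
    have hkey3 : ∀ x : ℤ, (ffz M (x + d a) : ℚ) ≤
        δ + α * (ffz M (x + d a + d b) : ℚ) + (1 - α) * (ffz M x : ℚ) := by
      intro x
      by_cases hR : R = 0
      · rw [hαdef, if_pos hR]
        have hPQ := hPQR0 hR
        have h1 : ffz M (x + d a) ≤ ffz M x + ffz M (d a) := by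
          have := ffz_subadd hM x (d a); linarith
        have h2 : (ffz M (x + d a) : ℚ) ≤ (ffz M x : ℚ) + P := by
          rw [hPdef]; exact_mod_cast h1
        rw [hδdef, hR, hPQ]
        linarith
      · have hRpos : 0 < R := lt_of_le_of_ne hR0 (Ne.symm hR)
        have hnd : ¬ M ∣ (d a + d b) := by
          intro hc
          exact hR (by rw [hRdef]; exact_mod_cast (ffz_eq_zero_iff hM).mpr hc)
        have hk := ffz_key hM (d a) (d b) x hnd
        have hkQ : 2 * R * (ffz M (x + d a) : ℚ) ≤
            (P + R - Q) * (ffz M (x + d a + d b) : ℚ)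
            + (Q + R - P) * (ffz M x : ℚ) + (P + Q - R) * R := by
          rw [hPdef, hQdef, hRdef]
          exact_mod_cast hk
        rw [hαdef, if_neg hR, hδdef]
        have hexp : (P + Q - R)/2 + (P + R - Q)/(2*R) * (ffz M (x + d a + d b) : ℚ)
            + (1 - (P + R - Q)/(2*R)) * (ffz M x : ℚ) - (ffz M (x + d a) : ℚ)
            = ((P + R - Q) * (ffz M (x + d a + d b) : ℚ)
              + (Q + R - P) * (ffz M x : ℚ) + (P + Q - R) * R
              - 2 * R * (ffz M (x + d a) : ℚ)) / (2 * R) := by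
          field_simp
          ring
        have hpos : 0 ≤ ((P + R - Q) * (ffz M (x + d a + d b) : ℚ)
              + (Q + R - P) * (ffz M x : ℚ) + (P + Q - R) * R
              - 2 * R * (ffz M (x + d a) : ℚ)) / (2 * R) :=
          div_nonneg (by linarith) (by linarith)
        linarith [hexp ▸ hpos]
    have hkey4 : ∀ x : ℤ, (ffz M (x + d b) : ℚ) ≤
        δ + (1 - α) * (ffz M (x + d a + d b) : ℚ) + α * (ffz M x : ℚ) := by
      intro x
      by_cases hR : R = 0
      · rw [hαdef, if_pos hR]
        have hPQ := hPQR0 hR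
        have h1 : ffz M (x + d b) ≤ ffz M (x + d b + d a) + ffz M (d a) :=
          ffz_sub_le hM (x + d b) (d a)
        rw [show x + d b + d a = x + d a + d b by ring] at h1
        have h2 : (ffz M (x + d b) : ℚ) ≤ (ffz M (x + d a + d b) : ℚ) + P := by
          rw [hPdef]; exact_mod_cast h1
        rw [hδdef, hR, hPQ]
        linarith
      · have hRpos : 0 < R := lt_of_le_of_ne hR0 (Ne.symm hR)
        have hnd : ¬ M ∣ (d b + d a) := by
          rw [show d b + d a = d a + d b by ring]
          intro hc
          exact hR (by rw [hRdef]; exact_mod_cast (ffz_eq_zero_iff hM).mpr hc)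
        have hk := ffz_key hM (d b) (d a) x hnd
        rw [show x + d b + d a = x + d a + d b by ring,
          show d b + d a = d a + d b by ring] at hk
        have hkQ : 2 * R * (ffz M (x + d b) : ℚ) ≤
            (Q + R - P) * (ffz M (x + d a + d b) : ℚ)
            + (P + R - Q) * (ffz M x : ℚ) + (Q + P - R) * R := by
          rw [hPdef, hQdef, hRdef]
          exact_mod_cast hk
        have hα' : 1 - α = (Q + R - P) / (2 * R) := by
          rw [hαdef, if_neg hR]; field_simp; ring
        rw [hα', hαdef, if_neg hR, hδdef]
        have hexp : (P + Q - R)/2 + (Q + R - P)/(2*R) * (ffz M (x + d a + d b) : ℚ)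
            + ((P + R - Q)/(2*R)) * (ffz M x : ℚ) - (ffz M (x + d b) : ℚ)
            = ((Q + R - P) * (ffz M (x + d a + d b) : ℚ)
              + (P + R - Q) * (ffz M x : ℚ) + (Q + P - R) * R
              - 2 * R * (ffz M (x + d b) : ℚ)) / (2 * R) := by
          field_simp
          ring
        have hpos : 0 ≤ ((Q + R - P) * (ffz M (x + d a + d b) : ℚ)
              + (P + R - Q) * (ffz M x : ℚ) + (Q + P - R) * R
              - 2 * R * (ffz M (x + d b) : ℚ)) / (2 * R) :=
          div_nonneg (by linarith) (by linarith)
        linarith [hexp ▸ hpos]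
    -- merged-sum helper
    have hmerge : ∀ W : Finset ι, a ∈ W → b ∈ W → ∑ i ∈ W.erase b, d' i = ∑ i ∈ W, d i := by
      intro W haW hbW
      have haW' : a ∈ W.erase b := Finset.mem_erase.mpr ⟨hab, haW⟩
      rw [← Finset.add_sum_erase (W.erase b) d' haW', ← Finset.add_sum_erase W d hbW,
        ← Finset.add_sum_erase (W.erase b) d haW']
      rw [Finset.sum_congr rfl (fun x hx => Function.update_of_ne (Finset.mem_erase.mp hx).1 _ d)]
      simp only [hd', Function.update_self]
      ring
    -- the weighting
    set ρ : ι → ι := fun i => if i = b then a else i with hρdef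
    set wgt : ι → ℚ := fun i => if i = a then α else if i = b then 1 - α else 1 with hwdef
    set t : ι → ι → ℚ := fun i j => if i = j then 0 else
      if (i = a ∧ j = b) ∨ (i = b ∧ j = a) then δ
      else wgt i * wgt j * t' (ρ i) (ρ j) with htdef
    have hw0 : ∀ i, 0 ≤ wgt i := by
      intro i; rw [hwdef]; dsimp only; split_ifs
      · exact hα0
      · linarith
      · norm_num
    have ht0 : ∀ i j, 0 ≤ t i j := by
      intro i j; rw [htdef]; dsimp only; split_ifs
      · exact le_refl 0
      · exact hδ0
      · exact mul_nonneg (mul_nonneg (hw0 i) (hw0 j)) (h0' _ _)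
    have htsym : ∀ i j, t i j = t j i := by
      intro i j
      rw [htdef]; dsimp only
      by_cases hij : i = j
      · simp [hij]
      · rw [if_neg hij, if_neg (show ¬ j = i from fun h => hij h.symm)]
        by_cases hc : (i = a ∧ j = b) ∨ (i = b ∧ j = a)
        · have hc' : (j = a ∧ i = b) ∨ (j = b ∧ i = a) := by tauto
          rw [if_pos hc, if_pos hc']
        · have hc' : ¬ ((j = a ∧ i = b) ∨ (j = b ∧ i = a)) := by tauto
          rw [if_neg hc, if_neg hc', hsym' (ρ i) (ρ j)]
          ring
    have htdiag : ∀ i, t i i = 0 := by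
      intro i; rw [htdef]; dsimp only; rw [if_pos rfl]
    have hρa : ρ a = a := by rw [hρdef]; dsimp only; rw [if_neg hab]
    have hρb : ρ b = a := by rw [hρdef]; dsimp only; rw [if_pos rfl]
    have hρl : ∀ l, l ≠ b → ρ l = l := by
      intro l hl; rw [hρdef]; dsimp only; rw [if_neg hl]
    have hwa : wgt a = α := by rw [hwdef]; dsimp only; rw [if_pos rfl]
    have hwb : wgt b = 1 - α := by
      rw [hwdef]; dsimp only; rw [if_neg (fun h => hab h.symm), if_pos rfl]
    have hwl : ∀ l, l ≠ a → l ≠ b → wgt l = 1 := by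
      intro l h1 h2; rw [hwdef]; dsimp only; rw [if_neg h1, if_neg h2]
    have htab : t a b = δ := by
      rw [htdef]; dsimp only; rw [if_neg hab, if_pos (Or.inl ⟨rfl, rfl⟩)]
    have htba : t b a = δ := by rw [htsym b a]; exact htab
    have htal : ∀ l, l ≠ a → l ≠ b → t a l = α * t' a l := by
      intro l h1 h2
      rw [htdef]; dsimp only
      rw [if_neg (show ¬ a = l from fun h => h1 h.symm),
        if_neg (by rintro (⟨-, h⟩ | ⟨h, -⟩); exact h2 h; exact hab h),
        hwa, hwl l h1 h2, hρa, hρl l h2]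
      ring
    have htbl : ∀ l, l ≠ a → l ≠ b → t b l = (1 - α) * t' a l := by
      intro l h1 h2
      rw [htdef]; dsimp only
      rw [if_neg (show ¬ b = l from fun h => h2 h.symm),
        if_neg (by rintro (⟨h, -⟩ | ⟨-, h⟩); exact hab h.symm; exact h1 h),
        hwb, hwl l h1 h2, hρb, hρl l h2]
      ring
    have htla : ∀ l, l ≠ a → l ≠ b → t l a = α * t' l a := by
      intro l h1 h2; rw [htsym l a, htal l h1 h2, hsym']
    have htlb : ∀ l, l ≠ a → l ≠ b → t l b = (1 - α) * t' l a := by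
      intro l h1 h2; rw [htsym l b, htbl l h1 h2, hsym']
    have htll : ∀ i j, i ≠ a → i ≠ b → j ≠ a → j ≠ b → t i j = t' i j := by
      intro i j hia hib hja hjb
      by_cases hij : i = j
      · subst hij; rw [htdiag i, hdiag' i]
      · rw [htdef]; dsimp only
        rw [if_neg hij, if_neg (by rintro (⟨h, -⟩ | ⟨h, -⟩); exact hia h; exact hib h),
          hwl i hia hib, hwl j hja hjb, hρl i hib, hρl j hjb]
        ring
    have hrowA : ∑ j ∈ V'.erase a, t' a j = R := by
      have h := hrow' a ha'
      simp only [hd', Function.update_self] at h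
      rw [hRdef]
      exact h
    -- rows
    have hrows : ∀ i ∈ V, ∑ j ∈ V.erase i, t i j = (ffz M (d i) : ℚ) := by
      intro i hi
      by_cases hia : i = a
      · subst hia
        have hbmem : b ∈ V.erase i := Finset.mem_erase.mpr ⟨fun h => hab h.symm, hb⟩
        rw [← Finset.add_sum_erase _ (fun j => t i j) hbmem, htab, Finset.erase_right_comm,
          Finset.sum_congr rfl (fun j hj => htal j (Finset.mem_erase.mp hj).1
            (Finset.mem_erase.mp (Finset.mem_erase.mp hj).2).1),
          ← Finset.mul_sum, hrowA, ← hPdef]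
        exact hrowα
      · by_cases hib : i = b
        · subst hib
          rw [show V.erase i = V' from rfl,
            ← Finset.add_sum_erase _ (fun j => t i j) ha', htba,
            Finset.sum_congr rfl (fun j hj => htbl j (Finset.mem_erase.mp hj).1
              (Finset.mem_erase.mp (Finset.mem_erase.mp hj).2).1),
            ← Finset.mul_sum, hrowA, ← hQdef]
          exact hrowβ
        · have hbmem : b ∈ V.erase i := Finset.mem_erase.mpr ⟨fun h => hib h.symm, hb⟩
          rw [← Finset.add_sum_erase _ (fun j => t i j) hbmem, htlb i hia hib,
            Finset.erase_right_comm]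
          have hamem : a ∈ (V'.erase i) := Finset.mem_erase.mpr ⟨fun h => hia h.symm, ha'⟩
          rw [← Finset.add_sum_erase _ (fun j => t i j) hamem, htla i hia hib,
            Finset.sum_congr rfl (fun j hj => htll i j hia hib (Finset.mem_erase.mp hj).1
              (Finset.mem_erase.mp (Finset.mem_erase.mp (Finset.mem_erase.mp hj).2).2).1)]
          have h := hrow' i (Finset.mem_erase.mpr ⟨hib, hi⟩)
          rw [show d' i = d i from Function.update_of_ne hia _ d] at h
          rw [← Finset.add_sum_erase _ (fun j => t' i j) hamem] at h
          linarith
    refine ⟨t, ht0, htsym, htdiag, hrows, ?_⟩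
    -- cuts
    intro I hI
    have hsd1 : ∀ (J : Finset ι), (V \ J).erase b = V' \ J := by
      intro J; ext x
      simp only [Finset.mem_erase, Finset.mem_sdiff, hV']
      tauto
    by_cases haI : a ∈ I <;> by_cases hbI : b ∈ I
    · -- a ∈ I, b ∈ I
      have hI' : I.erase b ⊆ V' := Finset.erase_subset_erase b hI
      have haI'' : a ∈ I.erase b := Finset.mem_erase.mpr ⟨hab, haI⟩
      have hVI : ∀ j ∈ V \ I, j ≠ a ∧ j ≠ b := by
        intro j hj
        have h2 := (Finset.mem_sdiff.mp hj).2
        exact ⟨fun h => h2 (h ▸ haI), fun h => h2 (h ▸ hbI)⟩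
      have hstep : ∀ j ∈ V \ I, ∑ i ∈ I, t i j = ∑ i ∈ I.erase b, t' i j := by
        intro j hj
        obtain ⟨hja, hjb⟩ := hVI j hj
        have e1 : ∑ i ∈ I, t i j = t b j + (t a j + ∑ i ∈ (I.erase b).erase a, t i j) := by
          rw [← Finset.add_sum_erase I (fun i => t i j) hbI,
            ← Finset.add_sum_erase _ (fun i => t i j) haI'']
        have e2 : ∑ i ∈ (I.erase b).erase a, t i j = ∑ i ∈ (I.erase b).erase a, t' i j :=
          Finset.sum_congr rfl (fun i hi => htll i j (Finset.mem_erase.mp hi).1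
            (Finset.mem_erase.mp (Finset.mem_erase.mp hi).2).1 hja hjb)
        have e3 : ∑ i ∈ I.erase b, t' i j
            = t' a j + ∑ i ∈ (I.erase b).erase a, t' i j :=
          (Finset.add_sum_erase _ (fun i => t' i j) haI'').symm
        rw [e1, e2, e3, htbl j hja hjb, htal j hja hjb]
        ring
      have hset : V' \ (I.erase b) = V \ I := by
        ext x
        simp only [hV', Finset.mem_sdiff, Finset.mem_erase]
        constructor
        · rintro ⟨⟨hxb, hxV⟩, hxn⟩
          exact ⟨hxV, fun hxI => hxn ⟨hxb, hxI⟩⟩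
        · rintro ⟨hxV, hxI⟩
          exact ⟨⟨fun h => hxI (h ▸ hbI), hxV⟩, fun h => hxI h.2⟩
      calc (ffz M (∑ i ∈ I, d i) : ℚ)
          = (ffz M (∑ i ∈ I.erase b, d' i) : ℚ) := by rw [hmerge I haI hbI]
        _ ≤ ∑ i ∈ I.erase b, ∑ j ∈ V' \ (I.erase b), t' i j := hcut' _ hI'
        _ = ∑ j ∈ V \ I, ∑ i ∈ I.erase b, t' i j := by rw [hset, Finset.sum_comm]
        _ = ∑ j ∈ V \ I, ∑ i ∈ I, t i j :=
            Finset.sum_congr rfl (fun j hj => (hstep j hj).symm)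
        _ = ∑ i ∈ I, ∑ j ∈ V \ I, t i j := Finset.sum_comm
    · -- a ∈ I, b ∉ I
      have hIV' : I ⊆ V' := fun x hx => Finset.mem_erase.mpr ⟨fun h => hbI (h ▸ hx), hI hx⟩
      have hbVI : b ∈ V \ I := Finset.mem_sdiff.mpr ⟨hb, hbI⟩
      have hmemA : ∀ i ∈ I.erase a, i ≠ a ∧ i ≠ b := fun i hi =>
        ⟨(Finset.mem_erase.mp hi).1, fun h => hbI (h ▸ (Finset.mem_erase.mp hi).2)⟩
      have hmemB : ∀ j ∈ (V \ I).erase b, j ≠ a ∧ j ≠ b := fun j hj =>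
        ⟨fun h => (Finset.mem_sdiff.mp (Finset.mem_erase.mp hj).2).2 (h ▸ haI),
          (Finset.mem_erase.mp hj).1⟩
      have haB : a ∉ (V \ I).erase b := fun h =>
        (Finset.mem_sdiff.mp (Finset.mem_erase.mp h).2).2 haI
      have hcutEq : ∑ i ∈ I, ∑ j ∈ V \ I, t i j
          = δ + α * (∑ j ∈ (V \ I).erase b, t' a j)
            + (1-α) * (∑ i ∈ I.erase a, t' i a)
            + ∑ i ∈ I.erase a, ∑ j ∈ (V \ I).erase b, t' i j := by
        have e1 : ∀ i ∈ I.erase a, ∑ j ∈ V \ I, t i j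
            = (1-α) * t' i a + ∑ j ∈ (V \ I).erase b, t' i j := by
          intro i hi
          obtain ⟨hia, hib⟩ := hmemA i hi
          rw [← Finset.add_sum_erase _ (fun j => t i j) hbVI, htlb i hia hib,
            Finset.sum_congr rfl (fun j hj => htll i j hia hib (hmemB j hj).1 (hmemB j hj).2)]
        have e2 : ∑ j ∈ V \ I, t a j = δ + α * ∑ j ∈ (V \ I).erase b, t' a j := by
          rw [← Finset.add_sum_erase _ (fun j => t a j) hbVI, htab,
            Finset.sum_congr rfl (fun j hj => htal j (hmemB j hj).1 (hmemB j hj).2),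
            ← Finset.mul_sum]
        rw [← Finset.add_sum_erase I (fun i => ∑ j ∈ V \ I, t i j) haI, e2,
          Finset.sum_congr rfl e1, Finset.sum_add_distrib, ← Finset.mul_sum]
        ring
      have hsetB : V' \ I = (V \ I).erase b := (hsd1 I).symm
      have hsetAB : V' \ (I.erase a) = insert a ((V \ I).erase b) := by
        ext x
        by_cases hxa : x = a
        · subst hxa
          constructor
          · intro _; exact Finset.mem_insert_self _ _
          · intro _
            exact Finset.mem_sdiff.mpr ⟨ha', fun h => (Finset.mem_erase.mp h).1 rfl⟩
        · simp only [hV', Finset.mem_sdiff, Finset.mem_erase, Finset.mem_insert]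
          constructor
          · rintro ⟨⟨hxb, hxV⟩, hxA⟩
            exact Or.inr ⟨hxb, hxV, fun hxI => hxA ⟨hxa, hxI⟩⟩
          · rintro (h | ⟨hxb, hxV, hxI⟩)
            · exact absurd h hxa
            · exact ⟨⟨hxb, hxV⟩, fun hA => hxI hA.2⟩
      have hcutI' : (ffz M ((∑ i ∈ I.erase a, d i) + d a + d b) : ℚ)
          ≤ (∑ j ∈ (V \ I).erase b, t' a j)
            + ∑ i ∈ I.erase a, ∑ j ∈ (V \ I).erase b, t' i j := by
        have hsum : ∑ i ∈ I, d' i = (∑ i ∈ I.erase a, d i) + d a + d b := by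
          rw [← Finset.add_sum_erase I d' haI,
            Finset.sum_congr rfl (fun x hx =>
              Function.update_of_ne (Finset.mem_erase.mp hx).1 _ d)]
          simp only [hd', Function.update_self]
          ring
        have h := hcut' I hIV'
        rw [hsum, hsetB, ← Finset.add_sum_erase I _ haI] at h
        exact h
      have hcutA' : (ffz M (∑ i ∈ I.erase a, d i) : ℚ)
          ≤ (∑ i ∈ I.erase a, t' i a)
            + ∑ i ∈ I.erase a, ∑ j ∈ (V \ I).erase b, t' i j := by
        have h := hcut' (I.erase a) ((Finset.erase_subset a I).trans hIV')
        rw [Finset.sum_congr rfl (fun x hx =>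
          Function.update_of_ne (hmemA x hx).1 _ d), hsetAB,
          Finset.sum_congr rfl (fun i (_ : i ∈ I.erase a) => Finset.sum_insert haB),
          Finset.sum_add_distrib] at h
        exact h
      have hxA := hkey3 (∑ i ∈ I.erase a, d i)
      have hIsum : ∑ i ∈ I, d i = (∑ i ∈ I.erase a, d i) + d a := by
        rw [← Finset.add_sum_erase I d haI]; ring
      rw [hIsum, hcutEq]
      have m1 := mul_le_mul_of_nonneg_left hcutI' hα0
      have m2 := mul_le_mul_of_nonneg_left hcutA' (by linarith : (0:ℚ) ≤ 1 - α)
      linarith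
    · -- b ∈ I, a ∉ I
      have hIV'' : I.erase b ⊆ V' := Finset.erase_subset_erase b hI
      have haVI : a ∈ V \ I := Finset.mem_sdiff.mpr ⟨ha, haI⟩
      have hmemA : ∀ i ∈ I.erase b, i ≠ a ∧ i ≠ b := fun i hi =>
        ⟨fun h => haI (h ▸ (Finset.mem_erase.mp hi).2), (Finset.mem_erase.mp hi).1⟩
      have hmemB : ∀ j ∈ (V \ I).erase a, j ≠ a ∧ j ≠ b := fun j hj =>
        ⟨(Finset.mem_erase.mp hj).1,
          fun h => (Finset.mem_sdiff.mp (Finset.mem_erase.mp hj).2).2 (h ▸ hbI)⟩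
      have haA : a ∉ I.erase b := fun h => haI (Finset.mem_erase.mp h).2
      have haB : a ∉ (V \ I).erase a := Finset.notMem_erase a _
      have hsub2 : insert a (I.erase b) ⊆ V' := by
        intro x hx
        rcases Finset.mem_insert.mp hx with h | h
        · exact h ▸ ha'
        · exact hIV'' h
      have hcutEq : ∑ i ∈ I, ∑ j ∈ V \ I, t i j
          = δ + (1-α) * (∑ j ∈ (V \ I).erase a, t' a j)
            + α * (∑ i ∈ I.erase b, t' i a)
            + ∑ i ∈ I.erase b, ∑ j ∈ (V \ I).erase a, t' i j := by
        have e1 : ∀ i ∈ I.erase b, ∑ j ∈ V \ I, t i j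
            = α * t' i a + ∑ j ∈ (V \ I).erase a, t' i j := by
          intro i hi
          obtain ⟨hia, hib⟩ := hmemA i hi
          rw [← Finset.add_sum_erase _ (fun j => t i j) haVI, htla i hia hib,
            Finset.sum_congr rfl (fun j hj => htll i j hia hib (hmemB j hj).1 (hmemB j hj).2)]
        have e2 : ∑ j ∈ V \ I, t b j = δ + (1-α) * ∑ j ∈ (V \ I).erase a, t' a j := by
          rw [← Finset.add_sum_erase _ (fun j => t b j) haVI, htba,
            Finset.sum_congr rfl (fun j hj => htbl j (hmemB j hj).1 (hmemB j hj).2),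
            ← Finset.mul_sum]
        rw [← Finset.add_sum_erase I (fun i => ∑ j ∈ V \ I, t i j) hbI, e2,
          Finset.sum_congr rfl e1, Finset.sum_add_distrib, ← Finset.mul_sum]
        ring
      have hsetB : V' \ (insert a (I.erase b)) = (V \ I).erase a := by
        ext x
        simp only [hV', Finset.mem_sdiff, Finset.mem_erase, Finset.mem_insert]
        constructor
        · rintro ⟨⟨hxb, hxV⟩, hxn⟩
          refine ⟨fun h => hxn (Or.inl h), hxV, fun hxI => hxn (Or.inr ⟨hxb, hxI⟩)⟩
        · rintro ⟨hxa, hxV, hxI⟩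
          exact ⟨⟨fun h => hxI (h ▸ hbI), hxV⟩,
            fun h => by rcases h with h | h; exact hxa h; exact hxI h.2⟩
      have hsetAB : V' \ (I.erase b) = insert a ((V \ I).erase a) := by
        ext x
        by_cases hxa : x = a
        · subst hxa
          constructor
          · intro _; exact Finset.mem_insert_self _ _
          · intro _
            exact Finset.mem_sdiff.mpr ⟨ha', fun h => haI (Finset.mem_erase.mp h).2⟩
        · simp only [hV', Finset.mem_sdiff, Finset.mem_erase, Finset.mem_insert]
          constructor
          · rintro ⟨⟨hxb, hxV⟩, hxn⟩
            exact Or.inr ⟨hxa, hxV, fun hxI => hxn ⟨hxb, hxI⟩⟩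
          · rintro (h | ⟨hxa', hxV, hxI⟩)
            · exact absurd h hxa
            · exact ⟨⟨fun h => hxI (h ▸ hbI), hxV⟩, fun h => hxI h.2⟩
      have hcutZ : (ffz M ((∑ i ∈ I.erase b, d i) + d a + d b) : ℚ)
          ≤ (∑ j ∈ (V \ I).erase a, t' a j)
            + ∑ i ∈ I.erase b, ∑ j ∈ (V \ I).erase a, t' i j := by
        have hsum : ∑ i ∈ insert a (I.erase b), d' i
            = (∑ i ∈ I.erase b, d i) + d a + d b := by
          rw [Finset.sum_insert haA,
            Finset.sum_congr rfl (fun x hx => Function.update_of_ne (hmemA x hx).1 _ d)]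
          simp only [hd', Function.update_self]
          ring
        have h := hcut' (insert a (I.erase b)) hsub2
        rw [hsum, hsetB, Finset.sum_insert haA] at h
        exact h
      have hcutX : (ffz M (∑ i ∈ I.erase b, d i) : ℚ)
          ≤ (∑ i ∈ I.erase b, t' i a)
            + ∑ i ∈ I.erase b, ∑ j ∈ (V \ I).erase a, t' i j := by
        have h := hcut' (I.erase b) hIV''
        rw [Finset.sum_congr rfl (fun x hx =>
          Function.update_of_ne (hmemA x hx).1 _ d), hsetAB,
          Finset.sum_congr rfl (fun i (_ : i ∈ I.erase b) => Finset.sum_insert haB),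
          Finset.sum_add_distrib] at h
        exact h
      have hxA := hkey4 (∑ i ∈ I.erase b, d i)
      have hIsum : ∑ i ∈ I, d i = (∑ i ∈ I.erase b, d i) + d b := by
        rw [← Finset.add_sum_erase I d hbI]; ring
      rw [hIsum, hcutEq]
      have m1 := mul_le_mul_of_nonneg_left hcutZ (by linarith : (0:ℚ) ≤ 1 - α)
      have m2 := mul_le_mul_of_nonneg_left hcutX hα0
      linarith
    · -- a ∉ I, b ∉ I
      have hIV' : I ⊆ V' := fun x hx => Finset.mem_erase.mpr ⟨fun h => hbI (h ▸ hx), hI hx⟩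
      have hbVI : b ∈ V \ I := Finset.mem_sdiff.mpr ⟨hb, hbI⟩
      have haB : a ∈ (V \ I).erase b :=
        Finset.mem_erase.mpr ⟨hab, Finset.mem_sdiff.mpr ⟨ha, haI⟩⟩
      have hmemI : ∀ i ∈ I, i ≠ a ∧ i ≠ b := fun i hi =>
        ⟨fun h => haI (h ▸ hi), fun h => hbI (h ▸ hi)⟩
      have hstep : ∀ i ∈ I, ∑ j ∈ V \ I, t i j = ∑ j ∈ V' \ I, t' i j := by
        intro i hi
        obtain ⟨hia, hib⟩ := hmemI i hi
        have e1 : ∑ j ∈ V \ I, t i j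
            = t i b + (t i a + ∑ j ∈ ((V \ I).erase b).erase a, t i j) := by
          rw [← Finset.add_sum_erase _ (fun j => t i j) hbVI,
            ← Finset.add_sum_erase _ (fun j => t i j) haB]
        have e2 : ∑ j ∈ ((V \ I).erase b).erase a, t i j
            = ∑ j ∈ ((V \ I).erase b).erase a, t' i j :=
          Finset.sum_congr rfl (fun j hj => htll i j hia hib (Finset.mem_erase.mp hj).1
            (Finset.mem_erase.mp (Finset.mem_erase.mp hj).2).1)
        have e3 : ∑ j ∈ V' \ I, t' i j
            = t' i a + ∑ j ∈ ((V \ I).erase b).erase a, t' i j := by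
          rw [← hsd1 I, ← Finset.add_sum_erase _ (fun j => t' i j) haB]
        rw [e1, e2, e3, htlb i hia hib, htla i hia hib]
        ring
      have hsum : ∑ i ∈ I, d' i = ∑ i ∈ I, d i :=
        Finset.sum_congr rfl (fun x hx => Function.update_of_ne (hmemI x hx).1 _ d)
      have h := hcut' I hIV'
      rw [hsum] at h
      calc (ffz M (∑ i ∈ I, d i) : ℚ)
          ≤ ∑ i ∈ I, ∑ j ∈ V' \ I, t' i j := h
        _ = ∑ i ∈ I, ∑ j ∈ V \ I, t i j :=
            Finset.sum_congr rfl (fun i hi => (hstep i hi).symm)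

set_option maxHeartbeats 1000000 in
/-- The divisor `D((d_1,…,d_n), m) = Σ ⟨d_i⟩_m ⟨m - d_i⟩_m ψ_i - Σ ⟨d(I)⟩_m ⟨d(J)⟩_m Δ_{I,J}`,
with `1 ≤ d_i ≤ m - 1` and `m ∣ Σ d_i`, is ℚ-linearly equivalent (modulo the Keel relations)
to an effective combination of the boundary divisors. -/
theorem D_effective {n : ℕ} (hn : 4 ≤ n) (m : ℕ) (hm : 2 ≤ m) (d : Fin n → ℤ)
    (hd : ∀ i, 1 ≤ d i ∧ d i ≤ (m : ℤ) - 1) (hdiv : (m : ℤ) ∣ ∑ i, d i) :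
    ∃ c : Finset (Fin n) → ℚ, (∀ I ∈ reps n, 0 ≤ c I) ∧
      ((∑ i, (((d i % (m : ℤ)) * (((m : ℤ) - d i) % (m : ℤ)) : ℤ) : ℚ) • psi i -
          ∑ I ∈ reps n,
            (((((∑ i ∈ I, d i) % (m : ℤ)) * ((∑ j ∈ Iᶜ, d j) % (m : ℤ))) : ℤ) : ℚ) • delta I) -
        ∑ I ∈ reps n, c I • delta I) ∈ keelRels n := by
  classical
  have hM : (0:ℤ) < (m:ℤ) := by exact_mod_cast (by omega : 0 < m)
  obtain ⟨t, ht0, htsym, htdiag, htrow, htcut⟩ :=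
    graph hM (Finset.univ : Finset (Fin n)) d hdiv
  have hcompl : ∀ I : Finset (Fin n), Finset.univ \ I = Iᶜ :=
    fun I => (Finset.compl_eq_univ_sdiff I).symm
  refine ⟨fun I => (∑ i ∈ I, ∑ j ∈ Iᶜ, t i j) - (ffz (m:ℤ) (∑ i ∈ I, d i) : ℚ), ?_, ?_⟩
  · intro I _
    dsimp only
    have h := htcut I (Finset.subset_univ I)
    rw [hcompl I] at h
    exact sub_nonneg.mpr h
  · -- coefficient identities
    have hai : ∀ i, ((d i % (m:ℤ)) * (((m:ℤ) - d i) % (m:ℤ)) : ℤ) = ffz (m:ℤ) (d i) := by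
      intro i
      have h1 : ((m:ℤ) - d i) % (m:ℤ) = (-(d i)) % (m:ℤ) := by
        rw [show (m:ℤ) - d i = -(d i) + (m:ℤ)*1 by ring, Int.add_mul_emod_self_left]
      rw [ffz, h1]
    have hbI : ∀ I : Finset (Fin n),
        (((∑ i ∈ I, d i) % (m:ℤ)) * ((∑ j ∈ Iᶜ, d j) % (m:ℤ)) : ℤ)
          = ffz (m:ℤ) (∑ i ∈ I, d i) := by
      intro I
      have hS : (∑ i ∈ I, d i) + (∑ j ∈ Iᶜ, d j) = ∑ i, d i :=
        Finset.sum_add_sum_compl I d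
      have h1 : (∑ j ∈ Iᶜ, d j) % (m:ℤ) = (-(∑ i ∈ I, d i)) % (m:ℤ) := by
        refine Int.ModEq.symm (Int.modEq_iff_dvd.mpr ?_)
        rw [show (∑ j ∈ Iᶜ, d j) - -(∑ i ∈ I, d i) = (∑ i ∈ I, d i) + (∑ j ∈ Iᶜ, d j)
          by ring, hS]
        exact hdiv
      rw [ffz, h1]
    -- the Keel element
    have hmem : (∑ i, ∑ j ∈ Finset.univ.erase i, (t i j / 2) •
        (psi i + psi j - ∑ I ∈ (reps n).filter
          (fun I => (i ∈ I ∧ j ∉ I) ∨ (j ∈ I ∧ i ∉ I)), delta I)) ∈ keelRels n := by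
      refine Submodule.sum_mem _ (fun i _ => Submodule.sum_mem _ (fun j hj => ?_))
      refine Submodule.smul_mem _ _ (Submodule.subset_span ?_)
      exact ⟨i, j, fun h => (Finset.mem_erase.mp hj).1 h.symm, rfl⟩
    -- expand the Keel element
    have hsep : ∀ i j : Fin n, (t i j / 2) • (psi i + psi j - ∑ I ∈ (reps n).filter
          (fun I => (i ∈ I ∧ j ∉ I) ∨ (j ∈ I ∧ i ∉ I)), delta I)
        = (t i j / 2) • psi i + (t i j / 2) • psi j
          - ∑ I ∈ reps n,
            (if (i ∈ I ∧ j ∉ I) ∨ (j ∈ I ∧ i ∉ I) then t i j / 2 else 0) • delta I := by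
      intro i j
      rw [smul_sub, smul_add, Finset.smul_sum, Finset.sum_filter]
      congr 1
      refine Finset.sum_congr rfl (fun I _ => ?_)
      split_ifs with h
      · rfl
      · rw [zero_smul]
    have hswap : (∑ i, ∑ j ∈ Finset.univ.erase i, (t i j / 2) • psi j)
        = ∑ i, ∑ j ∈ Finset.univ.erase i, (t j i / 2) • psi i := by
      refine Finset.sum_comm' ?_
      intro x y
      simp only [Finset.mem_erase, Finset.mem_univ, and_true, true_and]
      exact ne_comm
    have hpsi : (∑ i, ∑ j ∈ Finset.univ.erase i, (t i j / 2) • psi i)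
        + (∑ i, ∑ j ∈ Finset.univ.erase i, (t i j / 2) • psi j)
        = ∑ i, (ffz (m:ℤ) (d i) : ℚ) • psi i := by
      rw [hswap, ← Finset.sum_add_distrib]
      refine Finset.sum_congr rfl (fun i _ => ?_)
      rw [← Finset.sum_add_distrib]
      have h1 : ∀ j ∈ Finset.univ.erase i,
          (t i j / 2) • psi i + (t j i / 2) • psi i = t i j • psi i := by
        intro j _
        rw [htsym j i, ← add_smul, add_halves]
      rw [Finset.sum_congr rfl h1, ← Finset.sum_smul, htrow i (Finset.mem_univ i)]
    have hcoef : ∀ I : Finset (Fin n),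
        (∑ i, ∑ j ∈ Finset.univ.erase i,
          (if (i ∈ I ∧ j ∉ I) ∨ (j ∈ I ∧ i ∉ I) then t i j / 2 else 0))
        = ∑ i ∈ I, ∑ j ∈ Iᶜ, t i j := by
      intro I
      rw [← Finset.sum_add_sum_compl I]
      have hIn : ∀ i ∈ I, (∑ j ∈ Finset.univ.erase i,
          (if (i ∈ I ∧ j ∉ I) ∨ (j ∈ I ∧ i ∉ I) then t i j / 2 else 0))
          = ∑ j ∈ Iᶜ, t i j / 2 := by
        intro i hi
        rw [← Finset.sum_filter]
        refine Finset.sum_congr ?_ (fun _ _ => rfl)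
        ext j
        simp only [Finset.mem_filter, Finset.mem_erase, Finset.mem_univ, and_true,
          true_and, Finset.mem_compl]
        constructor
        · rintro ⟨hji, (⟨-, hjI⟩ | ⟨hjI, hiI⟩)⟩
          · exact hjI
          · exact absurd hi hiI
        · intro hjI
          exact ⟨fun h => hjI (h ▸ hi), Or.inl ⟨hi, hjI⟩⟩
      have hOut : ∀ i ∈ Iᶜ, (∑ j ∈ Finset.univ.erase i,
          (if (i ∈ I ∧ j ∉ I) ∨ (j ∈ I ∧ i ∉ I) then t i j / 2 else 0))
          = ∑ j ∈ I, t i j / 2 := by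
        intro i hi
        have hiI : i ∉ I := Finset.mem_compl.mp hi
        rw [← Finset.sum_filter]
        refine Finset.sum_congr ?_ (fun _ _ => rfl)
        ext j
        simp only [Finset.mem_filter, Finset.mem_erase, Finset.mem_univ, and_true,
          true_and]
        constructor
        · rintro ⟨hji, (⟨hiI', -⟩ | ⟨hjI, -⟩)⟩
          · exact absurd hiI' hiI
          · exact hjI
        · intro hjI
          exact ⟨fun h => hiI (h ▸ hjI), Or.inr ⟨hjI, hiI⟩⟩
      rw [Finset.sum_congr rfl hIn, Finset.sum_congr rfl hOut]
      have h2 : ∑ i ∈ Iᶜ, ∑ j ∈ I, t i j / 2 = ∑ i ∈ I, ∑ j ∈ Iᶜ, t i j / 2 := by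
        rw [Finset.sum_comm]
        exact Finset.sum_congr rfl (fun i _ => Finset.sum_congr rfl
          (fun j _ => by rw [htsym]))
      rw [h2, ← Finset.sum_add_distrib]
      refine Finset.sum_congr rfl (fun i _ => ?_)
      rw [← Finset.sum_add_distrib]
      exact Finset.sum_congr rfl (fun j _ => add_halves _)
    have hdelta : (∑ i, ∑ j ∈ Finset.univ.erase i, ∑ I ∈ reps n,
          (if (i ∈ I ∧ j ∉ I) ∨ (j ∈ I ∧ i ∉ I) then t i j / 2 else 0) • delta I)
        = ∑ I ∈ reps n, (∑ i ∈ I, ∑ j ∈ Iᶜ, t i j) • delta I := by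
      rw [Finset.sum_congr rfl (fun i (_ : i ∈ Finset.univ) => Finset.sum_comm),
        Finset.sum_comm]
      refine Finset.sum_congr rfl (fun I _ => ?_)
      rw [Finset.sum_congr rfl (fun i (_ : i ∈ Finset.univ) =>
        (Finset.sum_smul).symm), ← Finset.sum_smul, hcoef I]
    have hE : (∑ i, ∑ j ∈ Finset.univ.erase i, (t i j / 2) •
        (psi i + psi j - ∑ I ∈ (reps n).filter
          (fun I => (i ∈ I ∧ j ∉ I) ∨ (j ∈ I ∧ i ∉ I)), delta I))
        = (∑ i, (ffz (m:ℤ) (d i) : ℚ) • psi i)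
          - ∑ I ∈ reps n, (∑ i ∈ I, ∑ j ∈ Iᶜ, t i j) • delta I := by
      rw [Finset.sum_congr rfl (fun i (_ : i ∈ Finset.univ) =>
        Finset.sum_congr rfl (fun j (_ : j ∈ Finset.univ.erase i) => hsep i j))]
      rw [Finset.sum_congr rfl (fun i (_ : i ∈ Finset.univ) =>
        Finset.sum_sub_distrib (s := Finset.univ.erase i) _ _),
        Finset.sum_sub_distrib]
      rw [Finset.sum_congr rfl (fun i (_ : i ∈ Finset.univ) =>
        Finset.sum_add_distrib (s := Finset.univ.erase i)),
        Finset.sum_add_distrib]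
      rw [hpsi, hdelta]
    -- final rewriting of the goal
    have hA : (∑ i, (((d i % (m:ℤ)) * (((m:ℤ) - d i) % (m:ℤ)) : ℤ) : ℚ) • psi i)
        = ∑ i, (ffz (m:ℤ) (d i) : ℚ) • psi i :=
      Finset.sum_congr rfl (fun i _ => by rw [hai i])
    have hB : ∀ I ∈ reps n,
        ((((∑ i ∈ I, d i) % (m:ℤ)) * ((∑ j ∈ Iᶜ, d j) % (m:ℤ)) : ℤ) : ℚ) • delta I
          + ((∑ i ∈ I, ∑ j ∈ Iᶜ, t i j) - (ffz (m:ℤ) (∑ i ∈ I, d i) : ℚ)) • delta I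
        = (∑ i ∈ I, ∑ j ∈ Iᶜ, t i j) • delta I := by
      intro I _
      rw [hbI I, ← add_smul]
      congr 1
      ring
    rw [hA, sub_sub, ← Finset.sum_add_distrib, Finset.sum_congr rfl hB, ← hE]
    exact hmem
end

section
/- Let m ≥ 3, let d_1,…,d_n satisfy 1 ≤ dᵢ ≤ m−1 and m | Σ dᵢ. Suppose [n] admits exactly two m-partitions A ⊔ B and C ⊔ D (an m-partition is a proper partition with both parts m-divisible). Then A ⊔ B and C ⊔ D are transverse: all four intersections A∩C, A∩D, B∩C, B∩D are nonempty. -/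
open Finset

private lemma key_transverse {n : ℕ} (m : ℕ) (hm : 3 ≤ m) (d : Fin n → ℤ)
    (hd : ∀ i, 1 ≤ d i ∧ d i ≤ (m : ℤ) - 1) (hdiv : (m : ℤ) ∣ ∑ i, d i)
    (X Y : Finset (Fin n)) (hX : X.Nonempty) (hY : Y.Nonempty)
    (hXm : (m : ℤ) ∣ ∑ i ∈ X, d i) (hYm : (m : ℤ) ∣ ∑ i ∈ Y, d i)
    (hne : Y ≠ Xᶜ)
    (honly : ∀ I : Finset (Fin n), 2 ≤ I.card → 2 ≤ Iᶜ.card → (m : ℤ) ∣ ∑ i ∈ I, d i →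
      I = X ∨ I = Xᶜ ∨ I = Y ∨ I = Yᶜ) :
    (X ∩ Y).Nonempty := by
  -- auxiliary: any nonempty m-divisible set has at least 2 elements
  have aux : ∀ I : Finset (Fin n), I.Nonempty → (m : ℤ) ∣ ∑ i ∈ I, d i → 2 ≤ I.card := by
    intro I hI hIm
    by_contra h
    push_neg at h
    interval_cases hc : I.card
    · exact absurd (Finset.card_eq_zero.mp hc ▸ hI) (by simp)
    · obtain ⟨i, hi⟩ := Finset.card_eq_one.mp hc
      rw [hi, Finset.sum_singleton] at hIm
      obtain ⟨h1, h2⟩ := hd i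
      obtain ⟨k, hk⟩ := hIm
      have hmpos : (0:ℤ) < m := by exact_mod_cast by omega
      rcases lt_trichotomy k 0 with hk0 | hk0 | hk0
      · nlinarith
      · rw [hk0, mul_zero] at hk; omega
      · nlinarith
  by_contra h
  rw [Finset.not_nonempty_iff_eq_empty] at h
  have hdisj : Disjoint X Y := Finset.disjoint_iff_inter_eq_empty.mpr h
  set I := X ∪ Y with hI
  have hIm : (m : ℤ) ∣ ∑ i ∈ I, d i := by
    rw [hI, Finset.sum_union hdisj]; exact dvd_add hXm hYm
  have hIcm : (m : ℤ) ∣ ∑ i ∈ Iᶜ, d i := by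
    have := Finset.sum_add_sum_compl I d
    have : ∑ i ∈ Iᶜ, d i = (∑ i, d i) - ∑ i ∈ I, d i := by linarith
    rw [this]; exact dvd_sub hdiv hIm
  have hYsub : Y ⊆ Xᶜ := by
    intro y hy
    rw [Finset.mem_compl]
    intro hyX
    exact absurd (h ▸ Finset.mem_inter.mpr ⟨hyX, hy⟩) (by simp)
  have hIc_ne : Iᶜ.Nonempty := by
    obtain ⟨j, hj1, hj2⟩ := Finset.exists_of_ssubset (hYsub.ssubset_of_ne hne)
    refine ⟨j, ?_⟩
    simp only [hI, Finset.mem_compl, Finset.mem_union]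
    rw [Finset.mem_compl] at hj1
    tauto
  have h1 : 2 ≤ I.card := aux I (hX.mono Finset.subset_union_left) hIm
  have h2 : 2 ≤ Iᶜ.card := aux Iᶜ hIc_ne hIcm
  rcases honly I h1 h2 hIm with hc | hc | hc | hc
  · -- I = X : Y ⊆ X contradicts disjointness
    have hYX : Y ⊆ X := hc ▸ Finset.subset_union_right
    have h2' : Y ⊆ X ∩ Y := Finset.subset_inter hYX le_rfl
    rw [h, Finset.subset_empty] at h2'
    exact hY.ne_empty h2'
  · have hXI : X ⊆ Xᶜ := hc ▸ Finset.subset_union_left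
    have : X = ∅ := by
      rw [← Finset.subset_empty]
      intro x hx
      exact absurd hx (Finset.mem_compl.mp (hXI hx))
    exact hX.ne_empty this
  · have hXY : X ⊆ Y := hc ▸ Finset.subset_union_left
    have : X ⊆ X ∩ Y := Finset.subset_inter (le_refl X) hXY
    rw [h, Finset.subset_empty] at this
    exact hX.ne_empty this
  · have hYI : Y ⊆ Yᶜ := hc ▸ Finset.subset_union_right
    have : Y = ∅ := by
      rw [← Finset.subset_empty]
      intro x hx
      exact absurd hx (Finset.mem_compl.mp (hYI hx))
    exact hY.ne_empty this

/-- Suppose `m ≥ 3`, `1 ≤ d_i ≤ m - 1`, `m ∣ Σ d_i`, and `[n]` admits exactly two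
`m`-partitions `A ⊔ Aᶜ` and `C ⊔ Cᶜ` (an `m`-partition is a proper partition with both parts
`m`-divisible). Then the two `m`-partitions are transverse: `A ∩ C`, `A ∩ Cᶜ`, `Aᶜ ∩ C` and
`Aᶜ ∩ Cᶜ` are all nonempty. -/
theorem two_m_partitions_transverse {n : ℕ} (m : ℕ) (hm : 3 ≤ m) (d : Fin n → ℤ)
    (hd : ∀ i, 1 ≤ d i ∧ d i ≤ (m : ℤ) - 1) (hdiv : (m : ℤ) ∣ ∑ i, d i)
    (A C : Finset (Fin n))
    (hA : 2 ≤ A.card ∧ 2 ≤ Aᶜ.card) (hAm : (m : ℤ) ∣ ∑ i ∈ A, d i)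
    (hC : 2 ≤ C.card ∧ 2 ≤ Cᶜ.card) (hCm : (m : ℤ) ∣ ∑ i ∈ C, d i)
    (hdist : C ≠ A ∧ C ≠ Aᶜ)
    (honly : ∀ I : Finset (Fin n), 2 ≤ I.card → 2 ≤ Iᶜ.card → (m : ℤ) ∣ ∑ i ∈ I, d i →
      I = A ∨ I = Aᶜ ∨ I = C ∨ I = Cᶜ) :
    (A ∩ C).Nonempty ∧ (A ∩ Cᶜ).Nonempty ∧ (Aᶜ ∩ C).Nonempty ∧ (Aᶜ ∩ Cᶜ).Nonempty := by
  have hAne : A.Nonempty := Finset.card_pos.mp (by omega)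
  have hAcne : Aᶜ.Nonempty := Finset.card_pos.mp (by omega)
  have hCne : C.Nonempty := Finset.card_pos.mp (by omega)
  have hCcne : Cᶜ.Nonempty := Finset.card_pos.mp (by omega)
  have hAcm : (m : ℤ) ∣ ∑ i ∈ Aᶜ, d i := by
    have h := Finset.sum_add_sum_compl A d
    have : ∑ i ∈ Aᶜ, d i = (∑ i, d i) - ∑ i ∈ A, d i := by linarith
    rw [this]; exact dvd_sub hdiv hAm
  have hCcm : (m : ℤ) ∣ ∑ i ∈ Cᶜ, d i := by
    have h := Finset.sum_add_sum_compl C d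
    have : ∑ i ∈ Cᶜ, d i = (∑ i, d i) - ∑ i ∈ C, d i := by linarith
    rw [this]; exact dvd_sub hdiv hCm
  have hcompl_inj : ∀ X Y : Finset (Fin n), Xᶜ = Yᶜ → X = Y := by
    intro X Y hXY
    have := congrArg compl hXY
    simpa using this
  refine ⟨?_, ?_, ?_, ?_⟩
  · exact key_transverse m hm d hd hdiv A C hAne hCne hAm hCm hdist.2
      (fun I h1 h2 h3 => honly I h1 h2 h3)
  · refine key_transverse m hm d hd hdiv A Cᶜ hAne hCcne hAm hCcm
      (fun hh => hdist.1 (hcompl_inj C A hh)) ?_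
    intro I h1 h2 h3
    rcases honly I h1 h2 h3 with hc | hc | hc | hc
    · exact Or.inl hc
    · exact Or.inr (Or.inl hc)
    · exact Or.inr (Or.inr (Or.inr (by rw [hc, compl_compl])))
    · exact Or.inr (Or.inr (Or.inl hc))
  · refine key_transverse m hm d hd hdiv Aᶜ C hAcne hCne hAcm hCm
      (fun hh => hdist.1 (by rwa [compl_compl] at hh)) ?_
    intro I h1 h2 h3
    rcases honly I h1 h2 h3 with hc | hc | hc | hc
    · exact Or.inr (Or.inl (by rw [hc, compl_compl]))
    · exact Or.inl hc
    · exact Or.inr (Or.inr (Or.inl hc))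
    · exact Or.inr (Or.inr (Or.inr hc))
  · refine key_transverse m hm d hd hdiv Aᶜ Cᶜ hAcne hCcne hAcm hCcm
      (fun hh => hdist.2 (hcompl_inj C Aᶜ (by rwa [compl_compl] at hh ⊢))) ?_
    intro I h1 h2 h3
    rcases honly I h1 h2 h3 with hc | hc | hc | hc
    · exact Or.inr (Or.inl (by rw [hc, compl_compl]))
    · exact Or.inl hc
    · exact Or.inr (Or.inr (Or.inr (by rw [hc, compl_compl])))
    · exact Or.inr (Or.inr (Or.inl hc))
end

section
/- Let A ⊔ B and C ⊔ D be two distinct proper partitions of [n] that are not transverse. Then (up to swapping labels within each partition) one of the four parts of one partition is contained in a part of the other, and the three sets obtained as A∩C, A∩D (or the analogous configuration) together with the complementary part give a decomposition of [n] into three nonempty pieces; moreover if both partitions are m-partitions with respect to a degree function d, then all three pieces can be grouped to yield at least three distinct m-partitions of [n], provided each piece is nonempty. -/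
open Finset

lemma sum_compl_dvd' {n : ℕ} (m : ℤ) (d : Fin n → ℤ) (S : Finset (Fin n))
    (h : m ∣ ∑ i ∈ S, d i) (ht : m ∣ ∑ i, d i) : m ∣ ∑ i ∈ Sᶜ, d i := by
  have hs : ∑ i ∈ S, d i + ∑ i ∈ Sᶜ, d i = ∑ i, d i := Finset.sum_add_sum_compl S d
  have : ∑ i ∈ Sᶜ, d i = (∑ i, d i) - ∑ i ∈ S, d i := by linarith
  rw [this]; exact dvd_sub ht h

lemma three_parts {n : ℕ} (m : ℤ) (d : Fin n → ℤ) (X Y : Finset (Fin n))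
    (hXY : X ⊂ Y) (hX : X.Nonempty) (hYc : Yᶜ.Nonempty)
    (hdX : m ∣ ∑ i ∈ X, d i) (hdY : m ∣ ∑ i ∈ Y, d i) (ht : m ∣ ∑ i, d i) :
    ∃ P₁ P₂ P₃ : Finset (Fin n),
        (P₁.Nonempty ∧ P₁ᶜ.Nonempty ∧
          m ∣ ∑ i ∈ P₁, d i ∧ m ∣ ∑ i ∈ P₁ᶜ, d i) ∧
        (P₂.Nonempty ∧ P₂ᶜ.Nonempty ∧
          m ∣ ∑ i ∈ P₂, d i ∧ m ∣ ∑ i ∈ P₂ᶜ, d i) ∧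
        (P₃.Nonempty ∧ P₃ᶜ.Nonempty ∧
          m ∣ ∑ i ∈ P₃, d i ∧ m ∣ ∑ i ∈ P₃ᶜ, d i) ∧
        (P₁ ≠ P₂ ∧ P₁ ≠ P₂ᶜ) ∧ (P₁ ≠ P₃ ∧ P₁ ≠ P₃ᶜ) ∧ (P₂ ≠ P₃ ∧ P₂ ≠ P₃ᶜ) := by
  obtain ⟨a, haY, haX⟩ := Finset.exists_of_ssubset hXY
  obtain ⟨b, hb⟩ := hX
  obtain ⟨c, hc⟩ := hYc
  have hbY : b ∈ Y := hXY.subset hb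
  have hcY : c ∉ Y := Finset.mem_compl.mp hc
  refine ⟨X, Y, X ∪ Yᶜ, ?_, ?_, ?_, ?_, ?_, ?_⟩
  · refine ⟨⟨b, hb⟩, ⟨c, Finset.mem_compl.mpr fun h => hcY (hXY.subset h)⟩, hdX,
      sum_compl_dvd' m d X hdX ht⟩
  · exact ⟨⟨b, hbY⟩, ⟨c, hc⟩, hdY, sum_compl_dvd' m d Y hdY ht⟩
  · have hdisj : Disjoint X Yᶜ :=
      (disjoint_compl_right : Disjoint Y Yᶜ).mono_left hXY.subset
    have hsum : ∑ i ∈ X ∪ Yᶜ, d i = ∑ i ∈ X, d i + ∑ i ∈ Yᶜ, d i :=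
      Finset.sum_union hdisj
    have hdU : m ∣ ∑ i ∈ X ∪ Yᶜ, d i := by
      rw [hsum]; exact dvd_add hdX (sum_compl_dvd' m d Y hdY ht)
    refine ⟨⟨b, Finset.mem_union_left _ hb⟩,
      ⟨a, Finset.mem_compl.mpr ?_⟩, hdU, sum_compl_dvd' m d _ hdU ht⟩
    simp only [Finset.mem_union, Finset.mem_compl]
    push_neg
    exact ⟨haX, haY⟩
  · constructor
    · exact hXY.ne
    · intro h
      rw [h] at hb
      exact (Finset.mem_compl.mp hb) hbY
  · constructor
    · intro h
      have : c ∈ X := by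
        rw [h]; exact Finset.mem_union_right _ hc
      exact hcY (hXY.subset this)
    · intro h
      have hb2 : b ∈ (X ∪ Yᶜ)ᶜ := h ▸ hb
      exact (Finset.mem_compl.mp hb2) (Finset.mem_union_left _ hb)
  · constructor
    · intro h
      have : c ∈ Y := by rw [h]; exact Finset.mem_union_right _ hc
      exact hcY this
    · intro h
      have : b ∉ Y := by
        rw [h]
        simp only [Finset.compl_union, Finset.mem_inter, Finset.mem_compl, compl_compl]
        intro ⟨h1, _⟩; exact h1 hb
      exact this hbY

/-- Let `A ⊔ Aᶜ` and `C ⊔ Cᶜ` be two distinct proper partitions of `[n]` that are not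
transverse. Then one part of one partition is strictly contained in a part of the other;
moreover, if both partitions are `m`-partitions with respect to a degree function `d` (with
`m` dividing the total degree), then there exist at least three distinct partitions of `[n]`
into two nonempty `m`-divisible pieces. -/
theorem non_transverse_partitions {n : ℕ} (m : ℕ) (hm : 2 ≤ m) (d : Fin n → ℤ)
    (A C : Finset (Fin n))
    (hA : 2 ≤ A.card ∧ 2 ≤ Aᶜ.card) (hC : 2 ≤ C.card ∧ 2 ≤ Cᶜ.card)
    (hdist : C ≠ A ∧ C ≠ Aᶜ)
    (hnt : ¬ ((A ∩ C).Nonempty ∧ (A ∩ Cᶜ).Nonempty ∧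
              (Aᶜ ∩ C).Nonempty ∧ (Aᶜ ∩ Cᶜ).Nonempty)) :
    (A ⊂ C ∨ A ⊂ Cᶜ ∨ Aᶜ ⊂ C ∨ Aᶜ ⊂ Cᶜ) ∧
    ((m : ℤ) ∣ ∑ i ∈ A, d i → (m : ℤ) ∣ ∑ i ∈ C, d i → (m : ℤ) ∣ ∑ i, d i →
      ∃ P₁ P₂ P₃ : Finset (Fin n),
        (P₁.Nonempty ∧ P₁ᶜ.Nonempty ∧
          (m : ℤ) ∣ ∑ i ∈ P₁, d i ∧ (m : ℤ) ∣ ∑ i ∈ P₁ᶜ, d i) ∧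
        (P₂.Nonempty ∧ P₂ᶜ.Nonempty ∧
          (m : ℤ) ∣ ∑ i ∈ P₂, d i ∧ (m : ℤ) ∣ ∑ i ∈ P₂ᶜ, d i) ∧
        (P₃.Nonempty ∧ P₃ᶜ.Nonempty ∧
          (m : ℤ) ∣ ∑ i ∈ P₃, d i ∧ (m : ℤ) ∣ ∑ i ∈ P₃ᶜ, d i) ∧
        (P₁ ≠ P₂ ∧ P₁ ≠ P₂ᶜ) ∧ (P₁ ≠ P₃ ∧ P₁ ≠ P₃ᶜ) ∧ (P₂ ≠ P₃ ∧ P₂ ≠ P₃ᶜ)) := by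
  have hAne : A.Nonempty := Finset.card_pos.mp (by omega)
  have hAcne : Aᶜ.Nonempty := Finset.card_pos.mp (by omega)
  have hCne : C.Nonempty := Finset.card_pos.mp (by omega)
  have hCcne : Cᶜ.Nonempty := Finset.card_pos.mp (by omega)
  rw [not_and_or, not_and_or, not_and_or] at hnt
  simp only [Finset.not_nonempty_iff_eq_empty, ← Finset.disjoint_iff_inter_eq_empty] at hnt
  rcases hnt with h | h | h | h
  · -- A and C disjoint: A ⊂ Cᶜ
    have hsub : A ⊆ Cᶜ := le_compl_iff_disjoint_right.mpr h
    have hne : A ≠ Cᶜ := fun he => hdist.2 (by rw [he, compl_compl])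
    have hss : A ⊂ Cᶜ := lt_of_le_of_ne hsub hne
    exact ⟨Or.inr (Or.inl hss), fun hdA hdC ht =>
      three_parts _ d A Cᶜ hss hAne (by rwa [compl_compl]) hdA
        (sum_compl_dvd' _ d C hdC ht) ht⟩
  · -- A and Cᶜ disjoint: A ⊂ C
    have hsub : A ⊆ C := by
      have := le_compl_iff_disjoint_right.mpr h; rwa [compl_compl] at this
    have hss : A ⊂ C := lt_of_le_of_ne hsub (Ne.symm hdist.1)
    exact ⟨Or.inl hss, fun hdA hdC ht =>
      three_parts _ d A C hss hAne hCcne hdA hdC ht⟩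
  · -- Aᶜ and C disjoint: Aᶜ ⊂ Cᶜ
    have hsub : Aᶜ ⊆ Cᶜ := le_compl_iff_disjoint_right.mpr h
    have hne : Aᶜ ≠ Cᶜ := fun he => hdist.1 (compl_inj_iff.mp he).symm
    have hss : Aᶜ ⊂ Cᶜ := lt_of_le_of_ne hsub hne
    exact ⟨Or.inr (Or.inr (Or.inr hss)), fun hdA hdC ht =>
      three_parts _ d Aᶜ Cᶜ hss hAcne (by rwa [compl_compl])
        (sum_compl_dvd' _ d A hdA ht) (sum_compl_dvd' _ d C hdC ht) ht⟩
  · -- Aᶜ and Cᶜ disjoint: Aᶜ ⊂ C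
    have hsub : Aᶜ ⊆ C := by
      have := le_compl_iff_disjoint_right.mpr h; rwa [compl_compl] at this
    have hss : Aᶜ ⊂ C := lt_of_le_of_ne hsub (Ne.symm hdist.2)
    exact ⟨Or.inr (Or.inr (Or.inl hss)), fun hdA hdC ht =>
      three_parts _ d Aᶜ C hss hAcne hCcne (sum_compl_dvd' _ d A hdA ht) hdC ht⟩
end

section
/- Let m ≥ 2. Suppose w₁ and w₂ are weightings of complete graphs on disjoint sets S₁ and S₂ with [n] = S₁ ⊔ S₂, and let w be the weighting of the complete graph on [n] equal to w₁ on edges inside S₁, w₂ on edges inside S₂, and 0 on edges between S₁ and S₂. If for every proper partition of Sₜ (t = 1,2) into I ⊔ J the wₜ-flow across it is at least ⟨d(I)⟩_m⟨d(J)⟩_m, and the labels satisfy m | d(S₁), then for every partition I ⊔ J of [n] the w-flow across I ⊔ J is at least ⟨d(I)⟩_m⟨d(J)⟩_m. -/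
open Finset

/-- `(x % m) * ((-x) % m) = (x % m) * (m - x % m)` for `0 < m`. -/
lemma prod_neg_emod (m x : ℤ) (hm : 0 < m) :
    (x % m) * ((-x) % m) = (x % m) * (m - x % m) := by
  have hx0 : 0 ≤ x % m := Int.emod_nonneg _ (by omega)
  have hxm : x % m < m := Int.emod_lt_of_pos _ hm
  have hneg : (-x) % m = (m - x % m) % m := by
    have h := Int.mul_ediv_add_emod x m
    rw [show m - x % m = -x + m * (1 + x / m) by linarith, Int.add_mul_emod_self_left]
  rcases eq_or_ne (x % m) 0 with h | h
  · rw [h] at hneg ⊢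
    simp
  · have : (m - x % m) % m = m - x % m := Int.emod_eq_of_lt (by omega) (by omega)
    rw [hneg, this]

/-- Key superadditivity of `r ↦ ⟨r⟩(m - ⟨r⟩)` : the glued modular product bound. -/
lemma key_ineq (m a b : ℤ) (hm : 0 < m) :
    ((a + b) % m) * ((-(a + b)) % m) ≤ (a % m) * ((-a) % m) + (b % m) * ((-b) % m) := by
  rw [prod_neg_emod m a hm, prod_neg_emod m b hm, prod_neg_emod m (a + b) hm]
  have ha0 : 0 ≤ a % m := Int.emod_nonneg _ (by omega)
  have ham : a % m < m := Int.emod_lt_of_pos _ hm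
  have hb0 : 0 ≤ b % m := Int.emod_nonneg _ (by omega)
  have hbm : b % m < m := Int.emod_lt_of_pos _ hm
  have habm : (a + b) % m = (a % m + b % m) % m := by rw [Int.add_emod]
  rcases lt_or_ge (a % m + b % m) m with h | h
  · have : (a % m + b % m) % m = a % m + b % m := Int.emod_eq_of_lt (by omega) h
    rw [habm, this]
    nlinarith [mul_nonneg ha0 hb0]
  · have : (a % m + b % m) % m = a % m + b % m - m := by
      have h1 : (a % m + b % m) % m = (a % m + b % m - m) % m := by
        conv_lhs => rw [show a % m + b % m = (a % m + b % m - m) + m * 1 by ring]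
        rw [Int.add_mul_emod_self_left]
      rw [h1, Int.emod_eq_of_lt (by omega) (by omega)]
    rw [habm, this]
    nlinarith [mul_nonneg (sub_nonneg.mpr ham.le) (sub_nonneg.mpr hbm.le)]

/-- Gluing weightings along an `m`-partition `S₁ ⊔ S₂ = [n]`: let `w` be the weighting equal
to `w₁` on edges inside `S₁`, `w₂` on edges inside `S₂`, and `0` on the crossing edges. If
for every partition of `Sₜ` into two nonempty pieces `I ⊔ J` the `wₜ`-flow across it is at
least `⟨d(I)⟩_m ⟨d(J)⟩_m`, and `m ∣ d(S₁)` (and `m` divides the total degree), then the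
`w`-flow across every partition `I ⊔ Iᶜ` of `[n]` is at least `⟨d(I)⟩_m ⟨d(Iᶜ)⟩_m`. -/
theorem glued_weighting_flow {n : ℕ} (m : ℕ) (hm : 2 ≤ m) (d : Fin n → ℤ)
    (S₁ S₂ : Finset (Fin n)) (hdisj : Disjoint S₁ S₂) (hunion : S₁ ∪ S₂ = univ)
    (w₁ w₂ w : Fin n → Fin n → ℚ)
    (hsym₁ : ∀ i j, w₁ i j = w₁ j i) (hsym₂ : ∀ i j, w₂ i j = w₂ j i)
    (hw : ∀ i j, w i j =
      if i ∈ S₁ ∧ j ∈ S₁ then w₁ i j else if i ∈ S₂ ∧ j ∈ S₂ then w₂ i j else 0)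
    (h₁ : ∀ I : Finset (Fin n), I ⊆ S₁ → I.Nonempty → (S₁ \ I).Nonempty →
      ∑ i ∈ I, ∑ j ∈ S₁ \ I, w₁ i j ≥
        ((((∑ i ∈ I, d i) % (m : ℤ)) * ((∑ j ∈ S₁ \ I, d j) % (m : ℤ)) : ℤ) : ℚ))
    (h₂ : ∀ I : Finset (Fin n), I ⊆ S₂ → I.Nonempty → (S₂ \ I).Nonempty →
      ∑ i ∈ I, ∑ j ∈ S₂ \ I, w₂ i j ≥
        ((((∑ i ∈ I, d i) % (m : ℤ)) * ((∑ j ∈ S₂ \ I, d j) % (m : ℤ)) : ℤ) : ℚ))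
    (hdiv : (m : ℤ) ∣ ∑ i, d i) (hS₁ : (m : ℤ) ∣ ∑ i ∈ S₁, d i) :
    ∀ I : Finset (Fin n),
      ∑ i ∈ I, ∑ j ∈ Iᶜ, w i j ≥
        ((((∑ i ∈ I, d i) % (m : ℤ)) * ((∑ j ∈ Iᶜ, d j) % (m : ℤ)) : ℤ) : ℚ) := by
  intro I
  have hm0 : (0 : ℤ) < (m : ℤ) := by exact_mod_cast Nat.lt_of_lt_of_le Nat.zero_lt_two hm
  have hsplit : ∀ A : Finset (Fin n), A ∩ S₁ ∪ A ∩ S₂ = A := by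
    intro A
    rw [← inter_union_distrib_left, hunion, inter_univ]
  have hdA : ∀ A B : Finset (Fin n), Disjoint (A ∩ S₁) (B ∩ S₂) := fun A B =>
    hdisj.mono inter_subset_right inter_subset_right
  have hnot₂ : ∀ i : Fin n, i ∈ S₁ → i ∉ S₂ := fun i hi => Finset.disjoint_left.mp hdisj hi
  have hnot₁ : ∀ i : Fin n, i ∈ S₂ → i ∉ S₁ := fun i hi => Finset.disjoint_right.mp hdisj hi
  have hsd₁ : Iᶜ ∩ S₁ = S₁ \ I := by ext x; simp [mem_sdiff, and_comm]
  have hsd₂ : Iᶜ ∩ S₂ = S₂ \ I := by ext x; simp [mem_sdiff, and_comm]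
  have hsub₁ : S₁ \ (I ∩ S₁) = S₁ \ I := by ext x; simp [mem_sdiff]
  have hsub₂ : S₂ \ (I ∩ S₂) = S₂ \ I := by ext x; simp [mem_sdiff]
  have outer : ∀ (A : Finset (Fin n)) (f : Fin n → ℚ),
      ∑ i ∈ A, f i = ∑ i ∈ A ∩ S₁, f i + ∑ i ∈ A ∩ S₂, f i := by
    intro A f
    rw [← sum_union (hdA A A), hsplit]
  -- flow decomposition
  have hflow : ∑ i ∈ I, ∑ j ∈ Iᶜ, w i j =
      (∑ i ∈ I ∩ S₁, ∑ j ∈ S₁ \ I, w₁ i j) + (∑ i ∈ I ∩ S₂, ∑ j ∈ S₂ \ I, w₂ i j) := by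
    have c₁ : ∑ i ∈ I ∩ S₁, ∑ j ∈ Iᶜ ∩ S₂, w i j = 0 := by
      apply sum_eq_zero; intro i hi; apply sum_eq_zero; intro j hj
      have hi1 := (mem_inter.mp hi).2
      have hj2 := (mem_inter.mp hj).2
      rw [hw]
      simp [hnot₂ i hi1, hnot₁ j hj2]
    have c₂ : ∑ i ∈ I ∩ S₂, ∑ j ∈ Iᶜ ∩ S₁, w i j = 0 := by
      apply sum_eq_zero; intro i hi; apply sum_eq_zero; intro j hj
      have hi2 := (mem_inter.mp hi).2
      have hj1 := (mem_inter.mp hj).2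
      rw [hw]
      simp [hnot₁ i hi2, hnot₂ j hj1]
    have m₁ : ∑ i ∈ I ∩ S₁, ∑ j ∈ Iᶜ ∩ S₁, w i j = ∑ i ∈ I ∩ S₁, ∑ j ∈ S₁ \ I, w₁ i j := by
      rw [hsd₁]; refine sum_congr rfl fun i hi => sum_congr rfl fun j hj => ?_
      rw [hw, if_pos ⟨(mem_inter.mp hi).2, (mem_sdiff.mp hj).1⟩]
    have m₂ : ∑ i ∈ I ∩ S₂, ∑ j ∈ Iᶜ ∩ S₂, w i j = ∑ i ∈ I ∩ S₂, ∑ j ∈ S₂ \ I, w₂ i j := by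
      rw [hsd₂]; refine sum_congr rfl fun i hi => sum_congr rfl fun j hj => ?_
      have hi2 := (mem_inter.mp hi).2
      rw [hw, if_neg (fun h => hnot₁ i hi2 h.1), if_pos ⟨hi2, (mem_sdiff.mp hj).1⟩]
    calc ∑ i ∈ I, ∑ j ∈ Iᶜ, w i j
        = ∑ i ∈ I ∩ S₁, ∑ j ∈ Iᶜ, w i j + ∑ i ∈ I ∩ S₂, ∑ j ∈ Iᶜ, w i j := outer I _
      _ = (∑ i ∈ I ∩ S₁, (∑ j ∈ Iᶜ ∩ S₁, w i j + ∑ j ∈ Iᶜ ∩ S₂, w i j)) +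
          (∑ i ∈ I ∩ S₂, (∑ j ∈ Iᶜ ∩ S₁, w i j + ∑ j ∈ Iᶜ ∩ S₂, w i j)) := by
          congr 1 <;> exact sum_congr rfl fun i _ => outer Iᶜ _
      _ = (∑ i ∈ I ∩ S₁, ∑ j ∈ Iᶜ ∩ S₁, w i j) + (∑ i ∈ I ∩ S₁, ∑ j ∈ Iᶜ ∩ S₂, w i j) +
          ((∑ i ∈ I ∩ S₂, ∑ j ∈ Iᶜ ∩ S₁, w i j) + (∑ i ∈ I ∩ S₂, ∑ j ∈ Iᶜ ∩ S₂, w i j)) := by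
          rw [sum_add_distrib, sum_add_distrib]
      _ = (∑ i ∈ I ∩ S₁, ∑ j ∈ S₁ \ I, w₁ i j) + (∑ i ∈ I ∩ S₂, ∑ j ∈ S₂ \ I, w₂ i j) := by
          rw [m₁, m₂, c₁, c₂]; ring
  -- per-side bounds
  have hb₁ : ∑ i ∈ I ∩ S₁, ∑ j ∈ S₁ \ I, w₁ i j ≥
      ((((∑ i ∈ I ∩ S₁, d i) % (m : ℤ)) * ((∑ j ∈ S₁ \ I, d j) % (m : ℤ)) : ℤ) : ℚ) := by
    rcases (I ∩ S₁).eq_empty_or_nonempty with h | h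
    · simp [h]
    rcases (S₁ \ I).eq_empty_or_nonempty with h' | h'
    · simp [h']
    · have := h₁ (I ∩ S₁) inter_subset_right h (by rw [hsub₁]; exact h')
      rwa [hsub₁] at this
  have hb₂ : ∑ i ∈ I ∩ S₂, ∑ j ∈ S₂ \ I, w₂ i j ≥
      ((((∑ i ∈ I ∩ S₂, d i) % (m : ℤ)) * ((∑ j ∈ S₂ \ I, d j) % (m : ℤ)) : ℤ) : ℚ) := by
    rcases (I ∩ S₂).eq_empty_or_nonempty with h | h
    · simp [h]
    rcases (S₂ \ I).eq_empty_or_nonempty with h' | h'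
    · simp [h']
    · have := h₂ (I ∩ S₂) inter_subset_right h (by rw [hsub₂]; exact h')
      rwa [hsub₂] at this
  -- degree bookkeeping
  set a : ℤ := ∑ i ∈ I ∩ S₁, d i with ha
  set b : ℤ := ∑ i ∈ I ∩ S₂, d i with hb
  have hdS₂ : (m : ℤ) ∣ ∑ i ∈ S₂, d i := by
    have hsum : (∑ i ∈ S₁, d i) + ∑ i ∈ S₂, d i = ∑ i, d i := by
      rw [← sum_union hdisj, hunion]
    have : ∑ i ∈ S₂, d i = (∑ i, d i) - ∑ i ∈ S₁, d i := by omega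
    rw [this]
    exact dvd_sub hdiv hS₁
  have hdI : ∑ i ∈ I, d i = a + b := by
    rw [← sum_union (hdA I I), hsplit]
  have hJ₁ : ∑ j ∈ S₁ \ I, d j = (∑ i ∈ S₁, d i) - a := by
    have := Finset.sum_inter_add_sum_sdiff S₁ I d
    have hcomm : S₁ ∩ I = I ∩ S₁ := inter_comm S₁ I
    rw [hcomm] at this
    omega
  have hJ₂ : ∑ j ∈ S₂ \ I, d j = (∑ i ∈ S₂, d i) - b := by
    have := Finset.sum_inter_add_sum_sdiff S₂ I d
    have hcomm : S₂ ∩ I = I ∩ S₂ := inter_comm S₂ I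
    rw [hcomm] at this
    omega
  have hJc : ∑ j ∈ Iᶜ, d j = (∑ i, d i) - (a + b) := by
    have := Finset.sum_add_sum_compl I d
    omega
  have modneg : ∀ s x : ℤ, (m : ℤ) ∣ s → (s - x) % (m : ℤ) = (-x) % (m : ℤ) := by
    intro s x hs
    obtain ⟨k, hk⟩ := hs
    rw [hk, show (m : ℤ) * k - x = -x + (m : ℤ) * k by ring, Int.add_mul_emod_self_left]
  have e₁ : (∑ j ∈ S₁ \ I, d j) % (m : ℤ) = (-a) % (m : ℤ) := by
    rw [hJ₁, modneg _ _ hS₁]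
  have e₂ : (∑ j ∈ S₂ \ I, d j) % (m : ℤ) = (-b) % (m : ℤ) := by
    rw [hJ₂, modneg _ _ hdS₂]
  have ec : (∑ j ∈ Iᶜ, d j) % (m : ℤ) = (-(a + b)) % (m : ℤ) := by
    rw [hJc, modneg _ _ hdiv]
  rw [e₁] at hb₁
  rw [e₂] at hb₂
  rw [hflow, hdI, ec]
  have hk := key_ineq (m : ℤ) a b hm0
  have hk' : ((((a + b) % (m : ℤ)) * ((-(a + b)) % (m : ℤ)) : ℤ) : ℚ) ≤
      (((a % (m : ℤ)) * ((-a) % (m : ℤ)) + (b % (m : ℤ)) * ((-b) % (m : ℤ)) : ℤ) : ℚ) :=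
    Int.cast_le.mpr hk
  push_cast at hk' hb₁ hb₂ ⊢
  linarith
end
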